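/- arXiv:2604.11428 — 4 statements merged into one kernel-verified Lean document; each statement's English description precedes it below -/
import Mathlib

section
/- For all integers n and s with 1 ≤ s ≤ n−3, λ₁(Γ_{s,n}) < λ₁(Γ_{s+1,n}). -/
open Matrix

/-- A signed graph of order `n`: a real symmetric `n × n` matrix with zero diagonal
whose off-diagonal entries lie in `{-1, 0, 1}`. -/
def IsSignedGraph {n : ℕ} (A : Matrix (Fin n) (Fin n) ℝ) : Prop :=
  A.IsSymm ∧ (∀ i, A i i = 0) ∧ ∀ i j, A i j = -1 ∨ A i j = 0 ∨ A i j = 1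

/-- The index (largest eigenvalue) of a signed graph. -/
noncomputable def lambdaMax {n : ℕ} (A : Matrix (Fin n) (Fin n) ℝ) : ℝ :=
  sSup (spectrum ℝ A)

/-- The smallest eigenvalue of a signed graph. -/
noncomputable def lambdaMin {n : ℕ} (A : Matrix (Fin n) (Fin n) ℝ) : ℝ :=
  sInf (spectrum ℝ A)

/-- The spectral radius of a signed graph. -/
noncomputable def rho {n : ℕ} (A : Matrix (Fin n) (Fin n) ℝ) : ℝ :=
  max (lambdaMax A) (-(lambdaMin A))

/-- There is a cycle, all of whose vertices lie in `s`, along whose edges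
the product of the entries of `A` is negative. -/
def HasNegCycleOn {n : ℕ} (A : Matrix (Fin n) (Fin n) ℝ) (s : Set (Fin n)) : Prop :=
  ∃ m : ℕ, 3 ≤ m ∧ ∃ c : ℕ → Fin n,
    (∀ i < m, ∀ j < m, c i = c j → i = j) ∧ (∀ i < m, c i ∈ s) ∧
    (∀ i < m, A (c i) (c ((i + 1) % m)) ≠ 0) ∧
    (∏ i ∈ Finset.range m, A (c i) (c ((i + 1) % m))) < 0

/-- A signed graph is unbalanced if it has a negative cycle. -/
def IsUnbalanced {n : ℕ} (A : Matrix (Fin n) (Fin n) ℝ) : Prop :=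
  HasNegCycleOn A Set.univ

/-- An `m`-element set of pairwise adjacent vertices whose induced signed complete
subgraph is unbalanced. -/
def IsKmMinus {n : ℕ} (A : Matrix (Fin n) (Fin n) ℝ) (m : ℕ) (s : Finset (Fin n)) : Prop :=
  s.card = m ∧ (∀ i ∈ s, ∀ j ∈ s, i ≠ j → A i j ≠ 0) ∧ HasNegCycleOn A ↑s

/-- A `K₄⁻` of a signed graph. -/
def IsK4Minus {n : ℕ} (A : Matrix (Fin n) (Fin n) ℝ) (s : Finset (Fin n)) : Prop :=
  IsKmMinus A 4 s

/-- A signed graph is `t𝒦₄⁻`-free if it contains fewer than `t` distinct `K₄⁻`'s. -/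
def TK4Free {n : ℕ} (t : ℕ) (A : Matrix (Fin n) (Fin n) ℝ) : Prop :=
  {s : Finset (Fin n) | IsK4Minus A s}.ncard < t

/-- Switching isomorphism of signed graphs: `B = (PD) A (PD)ᵀ` for a permutation
matrix `P` and a `±1` diagonal matrix `D`. -/
def SwitchIso {n : ℕ} (A B : Matrix (Fin n) (Fin n) ℝ) : Prop :=
  ∃ (σ : Equiv.Perm (Fin n)) (d : Fin n → ℝ), (∀ i, d i = 1 ∨ d i = -1) ∧
    B = (σ.permMatrix ℝ * Matrix.diagonal d) * A * (σ.permMatrix ℝ * Matrix.diagonal d)ᵀ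

/-- The signed graph `Γ_{s,n}`: the vertices `0, …, n-2` are pairwise adjacent,
the last vertex `n-1` is adjacent exactly to `0, …, s`, and every edge is positive
except the single negative edge joining `n-1` and `0`. -/
noncomputable def GammaSN (s n : ℕ) : Matrix (Fin n) (Fin n) ℝ :=
  fun i j =>
    if i = j then 0
    else if i.val ≠ n - 1 ∧ j.val ≠ n - 1 then 1
    else if min i.val j.val = 0 then -1
    else if min i.val j.val ≤ s then 1
    else 0

/-- The signed graph `Σ_{k,n}` with parameter `r`: vertex `0` is `u₁`, vertex `1` is `u₂`,
vertices `2, …, r+1` are `w₁, …, w_r`, vertices `r+2, …, r+k+1` are `q₁, …, q_k`, and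
vertices `r+k+2, …, n-1` are `v₁, …, v_{n-2-r-k}`.  The only negative edge is `u₁u₂`. -/
noncomputable def SigmaKN (r k n : ℕ) : Matrix (Fin n) (Fin n) ℝ :=
  fun i j =>
    if i = j then 0
    else if min i.val j.val = 0 then (if max i.val j.val = 1 then -1 else 1)
    else if min i.val j.val = 1 then (if max i.val j.val ≤ r + k + 1 then 1 else 0)
    else if max i.val j.val ≤ r + 1 then 1
    else if max i.val j.val ≤ r + k + 1 then 0
    else 1

section Aux

lemma lambdaMax_mem {n : ℕ} (hn : 0 < n) {A : Matrix (Fin n) (Fin n) ℝ} (hA : A.IsHermitian) :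
    lambdaMax A ∈ spectrum ℝ A := by
  have hne : (spectrum ℝ A).Nonempty := ⟨_, hA.eigenvalues_mem_spectrum_real ⟨0, hn⟩⟩
  exact Set.Nonempty.csSup_mem hne (A.finite_spectrum)

lemma exists_top_eigenvector {n : ℕ} (hn : 0 < n) {A : Matrix (Fin n) (Fin n) ℝ}
    (hA : A.IsHermitian) : ∃ x : Fin n → ℝ, x ≠ 0 ∧ A *ᵥ x = lambdaMax A • x := by
  have hmem := lambdaMax_mem hn hA
  rw [← AlgEquiv.spectrum_eq (Matrix.toLinAlgEquiv' (R := ℝ) (n := Fin n)) A] at hmem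
  have hev : Module.End.HasEigenvalue (Matrix.toLinAlgEquiv' A) (lambdaMax A) :=
    Module.End.hasEigenvalue_iff_mem_spectrum.2 hmem
  obtain ⟨v, hv⟩ := hev.exists_hasEigenvector
  refine ⟨v, hv.2, ?_⟩
  have := Module.End.mem_eigenspace_iff.1 hv.1
  rwa [Matrix.toLinAlgEquiv'_apply] at this

lemma eigenvalue_le_lambdaMax {n : ℕ} {A : Matrix (Fin n) (Fin n) ℝ} (hA : A.IsHermitian)
    (i : Fin n) : hA.eigenvalues i ≤ lambdaMax A :=
  le_csSup (A.finite_spectrum.bddAbove) (hA.eigenvalues_mem_spectrum_real i)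

lemma rayleigh_le {n : ℕ} {A : Matrix (Fin n) (Fin n) ℝ} (hA : A.IsHermitian)
    (y : Fin n → ℝ) : y ⬝ᵥ (A *ᵥ y) ≤ lambdaMax A * (y ⬝ᵥ y) := by
  classical
  set U : Matrix (Fin n) (Fin n) ℝ := (Matrix.IsHermitian.eigenvectorUnitary hA : Matrix (Fin n) (Fin n) ℝ) with hU
  set w : Fin n → ℝ := star U *ᵥ y with hw
  have hUs : U * star U = 1 := Unitary.coe_mul_star_self _
  have hstarU : (star U : Matrix (Fin n) (Fin n) ℝ) = Uᵀ := by
    ext i j; simp [Matrix.star_apply]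
  have hyU : y ᵥ* U = w := by
    rw [hw, hstarU]
    conv_lhs => rw [← Matrix.transpose_transpose U]
    rw [Matrix.vecMul_transpose]
  have hww : w ⬝ᵥ w = y ⬝ᵥ y := by
    rw [hw, Matrix.dotProduct_mulVec, hstarU]
    conv_lhs => rw [← Matrix.transpose_transpose Uᵀ]
    rw [Matrix.vecMul_transpose, Matrix.transpose_transpose, ← hstarU,
      Matrix.mulVec_mulVec, hUs, Matrix.one_mulVec, dotProduct_comm]
  -- now the main computation
  have hdiag : y ⬝ᵥ (A *ᵥ y) = w ⬝ᵥ (Matrix.diagonal hA.eigenvalues *ᵥ w) := by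
    conv_lhs => rw [hA.spectral_theorem]
    rw [RCLike.ofReal_real_eq_id]
    rw [Function.id_comp, Unitary.conjStarAlgAut_apply, ← hU, ← Matrix.mulVec_mulVec, ← Matrix.mulVec_mulVec,
      Matrix.dotProduct_mulVec, hyU, ← hw]
  rw [hdiag, ← hww]
  have hterm : ∀ i : Fin n, w i * (Matrix.diagonal hA.eigenvalues *ᵥ w) i
      ≤ lambdaMax A * (w i * w i) := by
    intro i
    rw [Matrix.mulVec_diagonal]
    have h1 : hA.eigenvalues i ≤ lambdaMax A := eigenvalue_le_lambdaMax hA i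
    nlinarith [sq_nonneg (w i)]
  calc w ⬝ᵥ (Matrix.diagonal hA.eigenvalues *ᵥ w) ≤ ∑ i, lambdaMax A * (w i * w i) :=
        Finset.sum_le_sum (fun i _ => hterm i)
    _ = lambdaMax A * (w ⬝ᵥ w) := by rw [dotProduct, Finset.mul_sum]

section Gamma

lemma gamma_comm (s n : ℕ) (i j : Fin n) : GammaSN s n i j = GammaSN s n j i := by
  unfold GammaSN
  have h1 : ((i:ℕ) ≠ n-1 ∧ (j:ℕ) ≠ n-1) ↔ ((j:ℕ) ≠ n-1 ∧ (i:ℕ) ≠ n-1) := and_comm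
  have h2 : min (i:ℕ) (j:ℕ) = min (j:ℕ) (i:ℕ) := min_comm _ _
  have h3 : (i = j) ↔ (j = i) := eq_comm
  simp only [h1, h2, h3]

lemma gamma_herm (s n : ℕ) : (GammaSN s n).IsHermitian := by
  ext i j
  rw [Matrix.conjTranspose_apply, star_trivial, gamma_comm]

lemma gamma_entry {n s : ℕ} (hsn : s + 3 ≤ n) {b : Fin n} (hb : (b : ℕ) = n - 1)
    (i j : Fin n) (hi : (i : ℕ) < n - 1) :
    GammaSN s n i j =
      if j = i then 0 else if j = b then
        (if (i : ℕ) = 0 then -1 else if (i : ℕ) ≤ s then 1 else 0) else 1 := by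
  have hij : ∀ k : Fin n, k = b ↔ (k : ℕ) = n - 1 :=
    fun k => ⟨fun h => h ▸ hb, fun h => Fin.ext (h.trans hb.symm)⟩
  unfold GammaSN
  by_cases h1 : i = j
  · rw [if_pos h1, if_pos h1.symm]
  · rw [if_neg h1, if_neg (fun h : j = i => h1 h.symm)]
    by_cases h2 : j = b
    · have hjv : (j : ℕ) = n - 1 := (hij j).1 h2
      rw [if_pos h2, if_neg (show ¬((i:ℕ) ≠ n-1 ∧ (j:ℕ) ≠ n-1) by omega)]
      have hmin : min (i:ℕ) (j:ℕ) = (i:ℕ) := by omega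
      rw [hmin]
    · rw [if_neg h2]
      have hjv : (j:ℕ) ≠ n - 1 := fun h => h2 ((hij j).2 h)
      rw [if_pos (show (i:ℕ) ≠ n-1 ∧ (j:ℕ) ≠ n-1 from ⟨by omega, hjv⟩)]

lemma gamma_entry_b {n s : ℕ} (hsn : s + 3 ≤ n) {b : Fin n} (hb : (b : ℕ) = n - 1)
    (j : Fin n) :
    GammaSN s n b j = if (j:ℕ) = 0 then -1 else if (j:ℕ) ≤ s then 1 else 0 := by
  unfold GammaSN
  by_cases h1 : b = j
  · rw [if_pos h1, if_neg (show ¬((j:ℕ) = 0) by rw [← h1]; omega),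
      if_neg (show ¬((j:ℕ) ≤ s) by rw [← h1]; omega)]
  · have hjv : (j:ℕ) ≠ n - 1 := fun h => h1 (Fin.ext (hb.trans h.symm))
    have hjlt := j.isLt
    rw [if_neg h1, if_neg (show ¬((b:ℕ) ≠ n-1 ∧ (j:ℕ) ≠ n-1) by omega)]
    have hmin : min (b:ℕ) (j:ℕ) = (j:ℕ) := by omega
    rw [hmin]

lemma gamma_row {n s : ℕ} (hsn : s + 3 ≤ n) {b : Fin n} (hb : (b : ℕ) = n - 1)
    (v : Fin n → ℝ) (i : Fin n) (hi : (i : ℕ) < n - 1) :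
    (GammaSN s n *ᵥ v) i = (∑ j, v j) - v i +
      ((if (i:ℕ) = 0 then -1 else if (i:ℕ) ≤ s then 1 else 0) - 1) * v b := by
  have hib : i ≠ b := fun h => by rw [h, hb] at hi; omega
  have key : ∀ j : Fin n, GammaSN s n i j * v j =
      v j + (if j = i then -(v i) else 0) +
      (if j = b then ((if (i:ℕ) = 0 then -1 else if (i:ℕ) ≤ s then 1 else 0) - 1) * v b
        else 0) := by
    intro j
    rw [gamma_entry hsn hb i j hi]
    by_cases h1 : j = i
    · have hjb : ¬ j = b := fun h => hib (h1.symm.trans h)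
      rw [if_pos h1, if_pos h1, if_neg hjb, h1]
      ring
    · rw [if_neg h1, if_neg h1]
      by_cases h2 : j = b
      · rw [if_pos h2, if_pos h2, h2]
        ring
      · rw [if_neg h2, if_neg h2]
        ring
  show (∑ j, GammaSN s n i j * v j) = _
  rw [Finset.sum_congr rfl (fun j _ => key j), Finset.sum_add_distrib,
    Finset.sum_add_distrib, Finset.sum_ite_eq' Finset.univ i (fun _ => -(v i)),
    Finset.sum_ite_eq' Finset.univ b
      (fun _ => ((if (i:ℕ) = 0 then (-1:ℝ) else if (i:ℕ) ≤ s then 1 else 0) - 1) * v b)]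
  simp only [Finset.mem_univ, if_pos]
  ring

lemma gamma_row_b {n s : ℕ} (hsn : s + 3 ≤ n) {b : Fin n} (hb : (b : ℕ) = n - 1)
    (v : Fin n → ℝ) :
    (GammaSN s n *ᵥ v) b =
      ∑ j : Fin n, (if (j:ℕ) = 0 then -(v j) else if (j:ℕ) ≤ s then v j else 0) := by
  show (∑ j, GammaSN s n b j * v j) = _
  refine Finset.sum_congr rfl fun j _ => ?_
  rw [gamma_entry_b hsn hb]
  split_ifs <;> ring

lemma gamma_succ_entry {n s : ℕ} (hsn : s + 3 ≤ n) {a b : Fin n}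
    (ha : (a : ℕ) = s + 1) (hb : (b : ℕ) = n - 1) (i j : Fin n) :
    GammaSN (s+1) n i j = GammaSN s n i j +
      (if (i = a ∧ j = b) ∨ (i = b ∧ j = a) then 1 else 0) := by
  have hab : a ≠ b := fun h => by rw [h] at ha; omega
  unfold GammaSN
  by_cases hij : i = j
  · rw [if_pos hij, if_pos hij, if_neg (by
      rintro (⟨h1, h2⟩ | ⟨h1, h2⟩)
      · exact hab (h1.symm.trans (hij.trans h2))
      · exact hab (h2.symm.trans (hij.symm.trans h1)))]
    norm_num
  · rw [if_neg hij, if_neg hij]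
    by_cases h2 : (i:ℕ) ≠ n - 1 ∧ (j:ℕ) ≠ n - 1
    · rw [if_pos h2, if_pos h2, if_neg (by
        rintro (⟨h3, h4⟩ | ⟨h3, h4⟩)
        · exact h2.2 (by rw [h4, hb])
        · exact h2.1 (by rw [h3, hb]))]
      norm_num
    · rw [if_neg h2, if_neg h2]
      have hvals : (i:ℕ) = n - 1 ∨ (j:ℕ) = n - 1 := by
        by_contra hc; push_neg at hc; exact h2 ⟨hc.1, hc.2⟩
      have hine : (i:ℕ) ≠ (j:ℕ) := fun h => hij (Fin.ext h)
      have hilt := i.isLt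
      have hjlt := j.isLt
      have hcond : ((i = a ∧ j = b) ∨ (i = b ∧ j = a)) ↔ min (i:ℕ) (j:ℕ) = s + 1 := by
        constructor
        · rintro (⟨rfl, rfl⟩ | ⟨rfl, rfl⟩) <;> omega
        · intro hm
          have hsplit : (i:ℕ) = s + 1 ∧ (j:ℕ) = n - 1 ∨
              (i:ℕ) = n - 1 ∧ (j:ℕ) = s + 1 := by omega
          rcases hsplit with ⟨h5, h6⟩ | ⟨h5, h6⟩
          · exact Or.inl ⟨Fin.ext (by omega), Fin.ext (by omega)⟩
          · exact Or.inr ⟨Fin.ext (by omega), Fin.ext (by omega)⟩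
      simp only [hcond]
      by_cases h3 : min (i:ℕ) (j:ℕ) = 0
      · rw [if_pos h3, if_pos h3, if_neg (show ¬(min (i:ℕ) (j:ℕ) = s+1) by omega)]
        norm_num
      · rw [if_neg h3, if_neg h3]
        by_cases h4 : min (i:ℕ) (j:ℕ) ≤ s
        · rw [if_pos (show min (i:ℕ) (j:ℕ) ≤ s+1 by omega), if_pos h4,
            if_neg (show ¬(min (i:ℕ) (j:ℕ) = s+1) by omega)]
          norm_num
        · by_cases h5 : min (i:ℕ) (j:ℕ) = s + 1
          · rw [if_pos (show min (i:ℕ) (j:ℕ) ≤ s+1 by omega), if_neg h4, if_pos h5]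
            norm_num
          · rw [if_neg (show ¬(min (i:ℕ) (j:ℕ) ≤ s+1) by omega), if_neg h4, if_neg h5]
            norm_num

lemma sum_class {n s : ℕ} (hsn : s + 3 ≤ n) (C : ℝ) :
    ∑ j : Fin n, (if 1 ≤ (j:ℕ) ∧ (j:ℕ) ≤ s then C else 0) = (s : ℝ) * C := by
  rw [Fin.sum_univ_eq_sum_range (fun k => if 1 ≤ k ∧ k ≤ s then C else 0) n,
    ← Finset.sum_filter]
  have hf : (Finset.range n).filter (fun k => 1 ≤ k ∧ k ≤ s) = Finset.Icc 1 s := by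
    ext k
    simp only [Finset.mem_filter, Finset.mem_range, Finset.mem_Icc]
    omega
  rw [hf, Finset.sum_const, Nat.card_Icc]
  simp [nsmul_eq_mul]

lemma dot_mulVec_symm {n : ℕ} {M : Matrix (Fin n) (Fin n) ℝ} (hM : M.IsHermitian)
    (v w : Fin n → ℝ) : v ⬝ᵥ (M *ᵥ w) = w ⬝ᵥ (M *ᵥ v) := by
  have hMc : ∀ i j, M i j = M j i := fun i j => by
    conv_lhs => rw [← hM]
    rw [Matrix.conjTranspose_apply, star_trivial]
  simp only [dotProduct, Matrix.mulVec, Finset.mul_sum]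
  rw [Finset.sum_comm]
  refine Finset.sum_congr rfl fun j _ => Finset.sum_congr rfl fun i _ => ?_
  rw [hMc i j]
  ring

end Gamma

end Aux


lemma aux_mu {lam : ℝ} (h : 2 ≤ lam) : 0 < lam^2 + lam - 2 := by nlinarith

lemma aux_cmu {lam c : ℝ} (h1 : 0 ≤ c) (h2 : c + 1 ≤ lam) : c - 1 ≤ lam^2 + lam - 2 := by
  nlinarith

lemma aux_nonneg {P M q r : ℝ} (hP : 0 < P) (hM : 0 < M)
    (key : P * M * M * q = r) (hrhs : 0 ≤ r) : 0 ≤ q := by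
  nlinarith [mul_pos (mul_pos hP hM) hM]

lemma aux_wpos {xx e D N : ℝ} (h1 : 0 < xx) (h2 : 0 < e) (h3 : 0 ≤ D) (h4 : 0 < N) :
    0 < xx + 2*e*D + e^2*N := by nlinarith

lemma aux_gap {e D N K : ℝ} (hD : 0 ≤ D) (he : 0 < e) (hN : 0 < N)
    (h2 : e*(e*|K|) ≤ e*(N - e)) (h3 : -(e*(e*|K|)) ≤ e^2*K) :
    0 < D + 2*e*N + e^2*K := by nlinarith

lemma aux_delta {lam e D N K xx Cq : ℝ} (hD : 0 ≤ D) (he : 0 < e) (hN : 0 < N)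
    (heK : e * (|K| + 1) ≤ N) (hKval : Cq = K + lam * N) :
    lam * (xx + 2*e*D + e^2*N) < (lam * xx + D) + 2*e*(lam*D + N) + e^2*Cq := by
  have h1 : e * |K| ≤ N - e := by linarith
  have h2 : e * (e * |K|) ≤ e * (N - e) := mul_le_mul_of_nonneg_left h1 he.le
  have h3 : -(e * (e * |K|)) ≤ e^2 * K := by
    have u1 : -|K| ≤ K := neg_abs_le K
    have u2 : 0 ≤ e * e := mul_nonneg he.le he.le
    nlinarith [mul_le_mul_of_nonneg_left u1 u2]
  have hgap : 0 < D + 2*e*N + e^2*K := aux_gap hD he hN h2 h3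
  nlinarith [hgap]

set_option maxHeartbeats 2000000 in
theorem lambdaMax_GammaSN_strictMono (n s : ℕ) (hs : 1 ≤ s) (hsn : s + 3 ≤ n) :
    lambdaMax (GammaSN s n) < lambdaMax (GammaSN (s + 1) n) := by
  have hn4 : 4 ≤ n := by omega
  set lam := lambdaMax (GammaSN s n) with hlamd
  set lam' := lambdaMax (GammaSN (s+1) n) with hlamd'
  let b : Fin n := ⟨n-1, by omega⟩
  let a : Fin n := ⟨s+1, by omega⟩
  let z0 : Fin n := ⟨0, by omega⟩
  have hbv : (b:ℕ) = n - 1 := rfl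
  have hav : (a:ℕ) = s + 1 := rfl
  have hz0v : (z0:ℕ) = 0 := rfl
  have hab : a ≠ b := by
    intro h
    have := congrArg Fin.val h
    rw [hav, hbv] at this
    omega
  obtain ⟨x, hx0, hx⟩ := exists_top_eigenvector (show 0 < n by omega) (gamma_herm s n)
  rw [← hlamd] at hx
  have hxi : ∀ i, (GammaSN s n *ᵥ x) i = lam * x i := fun i => by
    rw [hx]; simp
  -- lower bound on lam
  have hsum1 : ∀ C : ℝ, ∑ i : Fin n, (if i = b then 0 else C) = ((n:ℝ) - 1) * C := by
    intro C
    have hpt : ∀ i : Fin n, (if i = b then (0:ℝ) else C) = C - (if i = b then C else 0) := by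
      intro i; split_ifs <;> ring
    rw [Finset.sum_congr rfl fun i _ => hpt i, Finset.sum_sub_distrib,
      Finset.sum_const, Finset.sum_ite_eq' Finset.univ b (fun _ => C)]
    simp [Finset.card_univ]
    ring
  have hlow : ((n:ℝ) - 2) ≤ lam := by
    set y : Fin n → ℝ := fun j => if j = b then 0 else 1 with hy
    have hyT : ∑ j, y j = (n:ℝ) - 1 := by
      rw [hy]; simpa using hsum1 1
    have hyA : y ⬝ᵥ (GammaSN s n *ᵥ y) = ((n:ℝ) - 1) * ((n:ℝ) - 2) := by
      have hpt : ∀ i : Fin n, y i * (GammaSN s n *ᵥ y) i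
          = (if i = b then 0 else ((n:ℝ) - 2)) := by
        intro i
        by_cases hib : i = b
        · simp [hy, hib]
        · have hiv : (i:ℕ) < n - 1 := by
            have h1 := i.isLt
            have h2 : (i:ℕ) ≠ n - 1 := fun h => hib (Fin.ext (h.trans hbv.symm))
            omega
          rw [if_neg hib, gamma_row hsn hbv y i hiv, hyT]
          have h1 : y i = 1 := by simp [hy, hib]
          have h2 : y b = 0 := by simp [hy]
          rw [h1, h2]
          ring
      show (∑ i, y i * (GammaSN s n *ᵥ y) i) = _
      rw [Finset.sum_congr rfl fun i _ => hpt i, hsum1]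
    have hyy : y ⬝ᵥ y = (n:ℝ) - 1 := by
      have hpt : ∀ i : Fin n, y i * y i = (if i = b then 0 else 1) := by
        intro i; by_cases hib : i = b <;> simp [hy, hib]
      show (∑ i, y i * y i) = _
      rw [Finset.sum_congr rfl fun i _ => hpt i]
      simpa using hsum1 1
    have hray := rayleigh_le (gamma_herm s n) y
    rw [hyA, hyy, ← hlamd] at hray
    have hn1 : (0:ℝ) < (n:ℝ) - 1 := by
      have : (4:ℝ) ≤ (n:ℝ) := by exact_mod_cast hn4
      linarith
    rw [mul_comm ((n:ℝ)-1) ((n:ℝ)-2)] at hray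
    exact le_of_mul_le_mul_right hray hn1
  have hs1 : (1:ℝ) ≤ (s:ℝ) := by exact_mod_cast hs
  have hns : (s:ℝ) + 3 ≤ (n:ℝ) := by exact_mod_cast hsn
  have hlam2 : (s:ℝ) + 1 ≤ lam := by linarith
  have hP : (0:ℝ) < lam + 1 := by linarith
  -- scalar eigen-equations
  set T : ℝ := ∑ j, x j with hT
  have h0 : (lam + 1) * x z0 = T - 2 * x b := by
    have hr := gamma_row (s := s) hsn hbv x z0 (by rw [hz0v]; omega)
    rw [hxi z0, ← hT, if_pos hz0v] at hr
    linear_combination hr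
  have hC2 : ∀ j : Fin n, 1 ≤ (j:ℕ) → (j:ℕ) ≤ s → (lam + 1) * x j = T := by
    intro j h1 h2
    have hr := gamma_row (s := s) hsn hbv x j (by omega)
    rw [hxi j, ← hT, if_neg (by omega : ¬((j:ℕ) = 0)), if_pos h2] at hr
    linear_combination hr
  have hC3 : ∀ j : Fin n, s + 1 ≤ (j:ℕ) → (j:ℕ) ≤ n - 2 → (lam + 1) * x j = T - x b := by
    intro j h1 h2
    have hr := gamma_row (s := s) hsn hbv x j (by omega)
    rw [hxi j, ← hT, if_neg (by omega : ¬((j:ℕ) = 0)),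
      if_neg (by omega : ¬((j:ℕ) ≤ s))] at hr
    linear_combination hr
  have hbE : (lam + 1) * (lam * x b) = -((lam + 1) * x z0) + (s:ℝ) * T := by
    have hr := gamma_row_b hsn hbv x
    rw [hxi b] at hr
    have hptw : ∀ j : Fin n,
        (lam + 1) * (if (j:ℕ) = 0 then -(x j) else if (j:ℕ) ≤ s then x j else 0)
        = (if j = z0 then -((lam+1) * x j) else 0)
          + (if 1 ≤ (j:ℕ) ∧ (j:ℕ) ≤ s then T else 0) := by
      intro j
      by_cases hj0 : (j:ℕ) = 0
      · have hjz : j = z0 := Fin.ext (by rw [hj0, hz0v])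
        rw [if_pos hj0, if_pos hjz, if_neg (by omega : ¬(1 ≤ (j:ℕ) ∧ (j:ℕ) ≤ s))]
        ring
      · have hjz : j ≠ z0 := fun h => hj0 (by rw [h, hz0v])
        rw [if_neg hj0, if_neg hjz]
        by_cases hjs : (j:ℕ) ≤ s
        · rw [if_pos hjs, if_pos (show 1 ≤ (j:ℕ) ∧ (j:ℕ) ≤ s from ⟨by omega, hjs⟩),
            hC2 j (by omega) hjs]
          ring
        · rw [if_neg hjs, if_neg (show ¬(1 ≤ (j:ℕ) ∧ (j:ℕ) ≤ s) by omega)]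
          ring
    calc (lam + 1) * (lam * x b)
        = ∑ j : Fin n, (lam + 1) *
            (if (j:ℕ) = 0 then -(x j) else if (j:ℕ) ≤ s then x j else 0) := by
          rw [hr, Finset.mul_sum]
      _ = ∑ j : Fin n, ((if j = z0 then -((lam+1) * x j) else 0)
            + (if 1 ≤ (j:ℕ) ∧ (j:ℕ) ≤ s then T else 0)) :=
          Finset.sum_congr rfl fun j _ => hptw j
      _ = -((lam + 1) * x z0) + (s:ℝ) * T := by
          rw [Finset.sum_add_distrib,
            Finset.sum_ite_eq' Finset.univ z0 (fun j => -((lam+1) * x j)),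
            sum_class hsn T]
          simp
  have hstar : (lam^2 + lam - 2) * x b = ((s:ℝ) - 1) * T := by
    linear_combination hbE - h0
  have ha2 : (lam + 1) * x a = T - x b := hC3 a (by rw [hav]) (by rw [hav]; omega)
  -- nonnegativity of the product
  have hmu : (0:ℝ) < lam^2 + lam - 2 := aux_mu (by linarith)
  have hcmu : (s:ℝ) - 1 ≤ lam^2 + lam - 2 := aux_cmu (by linarith) (by linarith)
  have hd : 0 ≤ x a * x b := by
    have key : (lam+1) * (lam^2 + lam - 2) * (lam^2 + lam - 2) * (x a * x b)
        = ((s:ℝ) - 1) * ((lam^2 + lam - 2) - ((s:ℝ) - 1)) * T^2 := by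
      linear_combination ((lam^2 + lam - 2) * (lam^2 + lam - 2) * (x b)) * ha2
        + ((lam^2 + lam - 2) * T - (lam^2 + lam - 2) * (x b) - ((s:ℝ)-1) * T) * hstar
    have hrhs : 0 ≤ ((s:ℝ) - 1) * ((lam^2 + lam - 2) - ((s:ℝ) - 1)) * T^2 :=
      mul_nonneg (mul_nonneg (by linarith) (by linarith)) (sq_nonneg T)
    exact aux_nonneg hP hmu key hrhs
  -- nondegeneracy
  have hN : 0 < x a * x a + x b * x b := by
    by_cases hz : x a = 0 ∧ x b = 0
    · exfalso
      have hT0 : T = 0 := by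
        have := ha2
        rw [hz.1, hz.2] at this
        linarith
      apply hx0
      funext j
      have hjlt := j.isLt
      show x j = (0 : ℝ)
      rcases (by omega :
          (j:ℕ) = 0 ∨ (1 ≤ (j:ℕ) ∧ (j:ℕ) ≤ s) ∨ (s+1 ≤ (j:ℕ) ∧ (j:ℕ) ≤ n-2)
          ∨ (j:ℕ) = n-1) with h | ⟨h1, h2⟩ | ⟨h1, h2⟩ | h
      · have hj : j = z0 := Fin.ext (by rw [h, hz0v])
        have h5 : (lam + 1) * x j = 0 := by rw [hj, h0, hz.2, hT0]; ring
        exact (mul_eq_zero.mp h5).resolve_left (ne_of_gt hP)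
      · have h5 : (lam + 1) * x j = 0 := by rw [hC2 j h1 h2, hT0]
        exact (mul_eq_zero.mp h5).resolve_left (ne_of_gt hP)
      · have h5 : (lam + 1) * x j = 0 := by rw [hC3 j h1 h2, hz.2, hT0]; ring
        exact (mul_eq_zero.mp h5).resolve_left (ne_of_gt hP)
      · have hj : j = b := Fin.ext (by rw [h, hbv])
        rw [hj]; exact hz.2
    · rcases not_and_or.mp hz with h | h
      · have u1 := mul_self_pos.mpr h
        have u2 := mul_self_nonneg (x b)
        linarith
      · have u1 := mul_self_pos.mpr h
        have u2 := mul_self_nonneg (x a)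
        linarith
  -- the correction vector
  set zv : Fin n → ℝ := fun i => (if i = a then x b else 0) + (if i = b then x a else 0)
    with hzv
  have hzva : zv a = x b := by rw [hzv]; simp [hab]
  have hzvb : zv b = x a := by rw [hzv]; simp [Ne.symm hab]
  have hA'x : GammaSN (s+1) n *ᵥ x = lam • x + zv := by
    funext i
    have hsum : (GammaSN (s+1) n *ᵥ x) i = (GammaSN s n *ᵥ x) i
        + ∑ j : Fin n, (if (i = a ∧ j = b) ∨ (i = b ∧ j = a) then 1 else 0) * x j := by
      show (∑ j, GammaSN (s+1) n i j * x j) = _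
      have hpt : ∀ j : Fin n, GammaSN (s+1) n i j * x j = GammaSN s n i j * x j
          + (if (i = a ∧ j = b) ∨ (i = b ∧ j = a) then 1 else 0) * x j := fun j => by
        rw [gamma_succ_entry hsn hav hbv i j]; ring
      rw [Finset.sum_congr rfl fun j _ => hpt j, Finset.sum_add_distrib]
      rfl
    rw [hsum, hxi i]
    have hcor : ∑ j : Fin n, (if (i = a ∧ j = b) ∨ (i = b ∧ j = a) then (1:ℝ) else 0) * x j
        = zv i := by
      by_cases hia : i = a
      · have hptw : ∀ j : Fin n,
            (if (i = a ∧ j = b) ∨ (i = b ∧ j = a) then (1:ℝ) else 0) * x j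
            = (if j = b then x j else 0) := by
          intro j
          by_cases hjb : j = b
          · rw [if_pos (Or.inl ⟨hia, hjb⟩), if_pos hjb]; ring
          · rw [if_neg ?_, if_neg hjb]
            · ring
            · rintro (⟨_, h⟩ | ⟨h, _⟩)
              · exact hjb h
              · exact hab (hia.symm.trans h)
        rw [Finset.sum_congr rfl fun j _ => hptw j,
          Finset.sum_ite_eq' Finset.univ b (fun j => x j), if_pos (Finset.mem_univ b),
          hia, hzva]
      · by_cases hib : i = b
        · have hptw : ∀ j : Fin n,
              (if (i = a ∧ j = b) ∨ (i = b ∧ j = a) then (1:ℝ) else 0) * x j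
              = (if j = a then x j else 0) := by
            intro j
            by_cases hja : j = a
            · rw [if_pos (Or.inr ⟨hib, hja⟩), if_pos hja]; ring
            · rw [if_neg ?_, if_neg hja]
              · ring
              · rintro (⟨h, _⟩ | ⟨_, h⟩)
                · exact hab (h.symm.trans hib)
                · exact hja h
          rw [Finset.sum_congr rfl fun j _ => hptw j,
            Finset.sum_ite_eq' Finset.univ a (fun j => x j), if_pos (Finset.mem_univ a),
            hib, hzvb]
        · have hptw : ∀ j : Fin n,
              (if (i = a ∧ j = b) ∨ (i = b ∧ j = a) then (1:ℝ) else 0) * x j = 0 := by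
            intro j
            rw [if_neg ?_]
            · ring
            · rintro (⟨h, _⟩ | ⟨h, _⟩)
              · exact hia h
              · exact hib h
          rw [Finset.sum_congr rfl fun j _ => hptw j, Finset.sum_const_zero, hzv]
          simp [hia, hib]
    rw [hcor]
    simp [Pi.add_apply, Pi.smul_apply, smul_eq_mul]
  -- dot products
  have hsum2 : ∀ f : Fin n → ℝ, (∑ i, f i * zv i) = f a * x b + f b * x a := by
    intro f
    have hptw : ∀ i : Fin n, f i * zv i
        = (if i = a then f i * x b else 0) + (if i = b then f i * x a else 0) := by
      intro i
      rw [hzv]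
      simp only []
      split_ifs <;> ring
    rw [Finset.sum_congr rfl fun i _ => hptw i, Finset.sum_add_distrib,
      Finset.sum_ite_eq' Finset.univ a (fun i => f i * x b),
      Finset.sum_ite_eq' Finset.univ b (fun i => f i * x a)]
    simp
  have hxz : x ⬝ᵥ zv = 2 * (x a * x b) := by
    show (∑ i, x i * zv i) = _
    rw [hsum2 x]; ring
  have hzz : zv ⬝ᵥ zv = x a * x a + x b * x b := by
    show (∑ i, zv i * zv i) = _
    rw [hsum2 zv, hzva, hzvb]; ring
  have hxA'x : x ⬝ᵥ (GammaSN (s+1) n *ᵥ x) = lam * (x ⬝ᵥ x) + 2 * (x a * x b) := by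
    rw [hA'x, dotProduct_add, dotProduct_smul, hxz, smul_eq_mul]
  have hzA'x : zv ⬝ᵥ (GammaSN (s+1) n *ᵥ x)
      = lam * (2 * (x a * x b)) + (x a * x a + x b * x b) := by
    rw [hA'x, dotProduct_add, dotProduct_smul, hzz, smul_eq_mul,
      dotProduct_comm zv x, hxz]
  have hxA'z : x ⬝ᵥ (GammaSN (s+1) n *ᵥ zv)
      = lam * (2 * (x a * x b)) + (x a * x a + x b * x b) := by
    rw [dot_mulVec_symm (gamma_herm (s+1) n) x zv, hzA'x]
  have hdxx : 0 < x ⬝ᵥ x := by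
    obtain ⟨i, hi⟩ := Function.ne_iff.mp hx0
    have hi' : x i ≠ 0 := by simpa using hi
    have : (0:ℝ) < ∑ i, x i * x i :=
      Finset.sum_pos' (fun i _ => mul_self_nonneg (x i))
        ⟨i, Finset.mem_univ i, mul_self_pos.mpr hi'⟩
    exact this
  -- epsilon perturbation
  set N : ℝ := x a * x a + x b * x b with hNd
  set D : ℝ := 2 * (x a * x b) with hDd
  have hD : 0 ≤ D := by rw [hDd]; linarith
  set Cq : ℝ := zv ⬝ᵥ (GammaSN (s+1) n *ᵥ zv) with hCq
  set K : ℝ := Cq - lam * N with hK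
  set ε : ℝ := min 1 (N / (|K| + 1)) with hε
  have habs : (0:ℝ) < |K| + 1 := by positivity
  have hε0 : 0 < ε := lt_min one_pos (div_pos hN habs)
  have hε1 : ε ≤ 1 := min_le_left _ _
  have hεK : ε * (|K| + 1) ≤ N := by
    have h := min_le_right 1 (N / (|K| + 1))
    calc ε * (|K|+1) ≤ (N/(|K|+1)) * (|K|+1) :=
          mul_le_mul_of_nonneg_right h (by linarith)
      _ = N := by field_simp
  set wv : Fin n → ℝ := x + ε • zv with hwv
  have hA'wv : GammaSN (s+1) n *ᵥ wv
      = (lam • x + zv) + ε • (GammaSN (s+1) n *ᵥ zv) := by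
    rw [hwv, Matrix.mulVec_add, Matrix.mulVec_smul, hA'x]
  have hwA : wv ⬝ᵥ (GammaSN (s+1) n *ᵥ wv)
      = (lam * (x ⬝ᵥ x) + D) + 2 * ε * (lam * D + N) + ε^2 * Cq := by
    rw [hA'wv, hwv]
    simp only [add_dotProduct, dotProduct_add, smul_dotProduct,
      dotProduct_smul, smul_eq_mul]
    rw [dotProduct_comm zv x, hxz, hzz]
    have h1 : zv ⬝ᵥ (GammaSN (s+1) n *ᵥ zv) = Cq := rfl
    have h2 : x ⬝ᵥ (GammaSN (s+1) n *ᵥ zv) = lam * D + N := by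
      rw [hxA'z, hNd, hDd]
    rw [h1, h2, hNd, hDd]
    ring
  have hww : wv ⬝ᵥ wv = (x ⬝ᵥ x) + 2 * ε * D + ε^2 * N := by
    rw [hwv]
    simp only [add_dotProduct, dotProduct_add, smul_dotProduct,
      dotProduct_smul, smul_eq_mul]
    rw [dotProduct_comm zv x, hxz, hzz, hNd, hDd]
    ring
  have hwpos : 0 < wv ⬝ᵥ wv := by
    rw [hww]
    exact aux_wpos hdxx hε0 hD hN
  have hΔ : lam * (wv ⬝ᵥ wv) < wv ⬝ᵥ (GammaSN (s+1) n *ᵥ wv) := by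
    rw [hwA, hww]
    exact aux_delta hD hε0 hN hεK (by rw [hK]; ring)
  have hray := rayleigh_le (gamma_herm (s+1) n) wv
  rw [← hlamd'] at hray
  have hfinal : lam * (wv ⬝ᵥ wv) < lam' * (wv ⬝ᵥ wv) := lt_of_lt_of_le hΔ hray
  exact lt_of_mul_lt_mul_right hfinal (le_of_lt hwpos)
end

section
/- Let r ≥ 1 be an integer and let Γ be a signed graph of order n ≥ 1 that is 𝒦_{r+3}⁻-free. Then −λ_n(Γ) ≤ n·(r+1)/(r+2). -/
open Matrix

lemma exists_eigvec {n : ℕ} (A : Matrix (Fin n) (Fin n) ℝ) {μ : ℝ}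
    (h : μ ∈ spectrum ℝ A) : ∃ v : Fin n → ℝ, v ≠ 0 ∧ A.mulVec v = μ • v := by
  rw [← AlgEquiv.spectrum_eq (Matrix.toLinAlgEquiv' : Matrix (Fin n) (Fin n) ℝ ≃ₐ[ℝ] _) A,
    ← Module.End.hasEigenvalue_iff_mem_spectrum] at h
  obtain ⟨v, hv⟩ := h.exists_hasEigenvector
  exact ⟨v, hv.2, by simpa [Matrix.toLinAlgEquiv'_apply, Matrix.toLin'_apply] using
    hv.apply_eq_smul⟩

lemma quad_expand {N : ℕ} (e : Fin N → Fin N → ℝ) (y u : Fin N → ℝ) (c : ℝ) :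
    ∑ i, ∑ j, e i j * (y i + c * u i) * (y j + c * u j)
      = (∑ i, ∑ j, e i j * y i * y j) + c * (∑ i, ∑ j, e i j * u i * y j)
        + c * (∑ i, ∑ j, e i j * y i * u j) + c ^ 2 * (∑ i, ∑ j, e i j * u i * u j) := by
  have h : ∀ i, ∑ j, e i j * (y i + c * u i) * (y j + c * u j)
      = ∑ j, (e i j * y i * y j + c * (e i j * u i * y j) + c * (e i j * y i * u j)
        + c ^ 2 * (e i j * u i * u j)) :=
    fun i => Finset.sum_congr rfl fun j _ => by ring
  simp_rw [h, Finset.sum_add_distrib, Finset.mul_sum]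

lemma motzkin_straus {N : ℕ} (Adj : Fin N → Fin N → Prop) [DecidableRel Adj]
    (hsym : ∀ i j, Adj i j → Adj j i) (hirr : ∀ i, ¬ Adj i i)
    (t : ℕ) (ht : 1 ≤ t)
    (hfree : ∀ s : Finset (Fin N), s.card = t + 1 → ¬ (∀ i ∈ s, ∀ j ∈ s, i ≠ j → Adj i j)) :
    ∀ k (y : Fin N → ℝ), (∀ i, 0 ≤ y i) →
      (Finset.univ.filter (fun i => y i ≠ 0)).card ≤ k →
      ∑ i, ∑ j, (if Adj i j then (1:ℝ) else 0) * y i * y j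
        ≤ (1 - 1/(t:ℝ)) * (∑ i, y i)^2 := by
  have htR : (0:ℝ) < t := by exact_mod_cast ht
  intro k
  induction k with
  | zero =>
    intro y hy hc
    have hy0 : ∀ i, y i = 0 := by
      intro i
      by_contra hne
      have : i ∈ Finset.univ.filter (fun i => y i ≠ 0) := by simp [hne]
      have := Finset.card_pos.mpr ⟨i, this⟩
      omega
    simp [hy0]
  | succ k ih =>
    intro y hy hc
    set s := Finset.univ.filter (fun i => y i ≠ 0) with hs
    by_cases hclq : ∀ i ∈ s, ∀ j ∈ s, i ≠ j → Adj i j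
    · -- clique case
      have hcard : s.card ≤ t := by
        by_contra hgt
        push_neg at hgt
        obtain ⟨u, hus, hu⟩ := Finset.exists_subset_card_eq (show t + 1 ≤ s.card from hgt)
        exact hfree u hu (fun i hi j hj hij => hclq i (hus hi) j (hus hj) hij)
      have hS : ∑ i ∈ s, y i = ∑ i, y i := by
        apply Finset.sum_subset (Finset.subset_univ s)
        intro i _ hi
        simpa [hs] using hi
      have hS2 : ∑ i ∈ s, (y i)^2 ≤ ∑ i, (y i)^2 :=
        Finset.sum_le_sum_of_subset_of_nonneg (Finset.subset_univ s)
          (fun i _ _ => sq_nonneg _)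
      have hCS : (∑ i, y i)^2 ≤ (t:ℝ) * ∑ i, (y i)^2 := by
        calc (∑ i, y i)^2 = (∑ i ∈ s, y i)^2 := by rw [hS]
          _ ≤ (s.card : ℝ) * ∑ i ∈ s, (y i)^2 := by
              exact sq_sum_le_card_mul_sum_sq
          _ ≤ (t:ℝ) * ∑ i, (y i)^2 := by
              apply mul_le_mul (by exact_mod_cast hcard) hS2
                (Finset.sum_nonneg fun i _ => sq_nonneg _) (le_of_lt htR)
      have hterm : ∑ i, ∑ j, (if Adj i j then (1:ℝ) else 0) * y i * y j
          ≤ ∑ i, ∑ j, (if i = j then 0 else y i * y j) := by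
        apply Finset.sum_le_sum; intro i _
        apply Finset.sum_le_sum; intro j _
        by_cases hij : Adj i j
        · have : i ≠ j := fun h => hirr i (h ▸ hij)
          simp [hij, this]
        · simp only [hij, if_false, zero_mul]
          by_cases h : i = j
          · simp [h]
          · simp only [h, if_false]
            exact mul_nonneg (hy i) (hy j)
      have hsplit : ∑ i, ∑ j, (if i = j then (0:ℝ) else y i * y j)
          = (∑ i, y i)^2 - ∑ i, (y i)^2 := by
        have h2 : ∀ i : Fin N, ∑ j, (if i = j then (0:ℝ) else y i * y j)
            = (∑ j, y i * y j) - y i * y i := by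
          intro i
          have h1 : ∀ j, (if i = j then (0:ℝ) else y i * y j)
              = y i * y j - (if i = j then y i * y j else 0) := fun j => by
            by_cases h : i = j <;> simp [h]
          simp_rw [h1, Finset.sum_sub_distrib, Finset.sum_ite_eq, Finset.mem_univ, if_true]
        simp_rw [h2, Finset.sum_sub_distrib, ← Finset.mul_sum]
        rw [← Finset.sum_mul, ← sq]
        congr 1
        exact Finset.sum_congr rfl fun i _ => (pow_two (y i)).symm
      calc ∑ i, ∑ j, (if Adj i j then (1:ℝ) else 0) * y i * y j
          ≤ (∑ i, y i)^2 - ∑ i, (y i)^2 := hterm.trans (le_of_eq hsplit)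
        _ ≤ (1 - 1/(t:ℝ)) * (∑ i, y i)^2 := by
            have h1 : (1/(t:ℝ)) * (∑ i, y i)^2 ≤ ∑ i, (y i)^2 := by
              rw [div_mul_eq_mul_div, one_mul, div_le_iff₀ htR] at *
              nlinarith [hCS]
            nlinarith
    · -- non-clique case: shift mass
      push_neg at hclq
      obtain ⟨a0, ha0, b0, hb0, hab0, hnadj0⟩ := hclq
      have key : ∀ a b : Fin N, a ∈ s → b ∈ s → a ≠ b → ¬ Adj a b →
          (∑ j, (if Adj b j then (1:ℝ) else 0) * y j
            ≤ ∑ j, (if Adj a j then (1:ℝ) else 0) * y j) →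
          ∑ i, ∑ j, (if Adj i j then (1:ℝ) else 0) * y i * y j
            ≤ (1 - 1/(t:ℝ)) * (∑ i, y i)^2 := by
        intro a b ha hb hab hnadj hN
        set c := y b with hcdef
        set u : Fin N → ℝ := fun i => if i = a then 1 else if i = b then -1 else 0 with hu
        set y' : Fin N → ℝ := fun i => y i + c * u i with hy'
        have hy'a : y' a = y a + y b := by simp [hy', hu, hab.symm, hcdef]
        have hy'b : y' b = 0 := by simp [hy', hu, hab.symm, Ne.symm hab, hcdef]
        have hy'other : ∀ i, i ≠ a → i ≠ b → y' i = y i := by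
          intro i hia hib; simp [hy', hu, hia, hib]
        have hy'nn : ∀ i, 0 ≤ y' i := by
          intro i
          by_cases h1 : i = a
          · rw [h1, hy'a]; exact add_nonneg (hy a) (hy b)
          by_cases h2 : i = b
          · rw [h2, hy'b]
          · rw [hy'other i h1 h2]; exact hy i
        have hsum : ∑ i, y' i = ∑ i, y i := by
          rw [← sub_eq_zero, ← Finset.sum_sub_distrib]
          have hvan : ∀ i ∈ Finset.univ, i ∉ ({a, b} : Finset (Fin N)) → y' i - y i = 0 := by
            intro i _ hi
            simp only [Finset.mem_insert, Finset.mem_singleton, not_or] at hi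
            rw [hy'other i hi.1 hi.2, sub_self]
          rw [← Finset.sum_subset (Finset.subset_univ ({a, b} : Finset (Fin N))) hvan,
            Finset.sum_pair hab, hy'a, hy'b]
          ring
        have hsupp : Finset.univ.filter (fun i => y' i ≠ 0) ⊆ s.erase b := by
          intro i hi
          simp only [Finset.mem_filter, Finset.mem_univ, true_and] at hi
          rw [Finset.mem_erase]
          constructor
          · rintro rfl; exact hi hy'b
          · by_cases h1 : i = a
            · rw [h1]; exact ha
            · by_cases h2 : i = b
              · rw [h2] at hi; exact absurd hy'b hi
              · rw [hy'other i h1 h2] at hi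
                simp [hs, hi]
        have hcard' : (Finset.univ.filter (fun i => y' i ≠ 0)).card ≤ k := by
          have h1 := Finset.card_le_card hsupp
          have h2 : (s.erase b).card = s.card - 1 := Finset.card_erase_of_mem hb
          have h3 : 1 ≤ s.card := Finset.card_pos.mpr ⟨b, hb⟩
          omega
        set e : Fin N → Fin N → ℝ := fun i j => if Adj i j then 1 else 0 with he
        have hesymm : ∀ i j, e i j = e j i := by
          intro i j
          by_cases h : Adj i j
          · simp [he, h, hsym i j h]
          · have h' : ¬ Adj j i := fun hji => h (hsym j i hji)
            simp [he, h, h']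
        have hua : u a = 1 := by simp [hu]
        have hub : u b = -1 := by simp [hu, Ne.symm hab]
        have hBu : ∀ z : Fin N → ℝ, ∑ i, ∑ j, e i j * u i * z j
            = (∑ j, e a j * z j) - (∑ j, e b j * z j) := by
          intro z
          have hvan : ∀ i ∈ Finset.univ, i ∉ ({a, b} : Finset (Fin N)) →
              ∑ j, e i j * u i * z j = 0 := by
            intro i _ hi
            simp only [Finset.mem_insert, Finset.mem_singleton, not_or] at hi
            have : u i = 0 := by simp [hu, hi.1, hi.2]
            simp [this]
          rw [← Finset.sum_subset (Finset.subset_univ ({a, b} : Finset (Fin N))) hvan,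
            Finset.sum_pair hab]
          simp only [hua, hub]
          rw [← Finset.sum_sub_distrib, ← Finset.sum_add_distrib]
          exact Finset.sum_congr rfl fun j _ => by ring
        have hBy : ∑ i, ∑ j, e i j * y i * u j
            = (∑ j, e a j * y j) - (∑ j, e b j * y j) := by
          rw [Finset.sum_comm]
          refine Eq.trans (Finset.sum_congr rfl fun i _ =>
            Finset.sum_congr rfl fun j _ => ?_) (hBu y)
          rw [hesymm j i]; ring
        have hQu : ∑ i, ∑ j, e i j * u i * u j = 0 := by
          rw [hBu u]
          have hvan : ∀ (i : Fin N), ∀ j ∈ Finset.univ, j ∉ ({a, b} : Finset (Fin N)) →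
              e i j * u j = 0 := by
            intro i j _ hj
            simp only [Finset.mem_insert, Finset.mem_singleton, not_or] at hj
            have : u j = 0 := by simp [hu, hj.1, hj.2]
            simp [this]
          rw [← Finset.sum_subset (Finset.subset_univ ({a, b} : Finset (Fin N))) (hvan a),
            ← Finset.sum_subset (Finset.subset_univ ({a, b} : Finset (Fin N))) (hvan b),
            Finset.sum_pair hab, Finset.sum_pair hab, hua, hub]
          have heaa : e a a = 0 := by simp [he, hirr a]
          have hebb : e b b = 0 := by simp [he, hirr b]
          have heab : e a b = 0 := by simp [he, hnadj]
          have heba : e b a = 0 := by rw [← hesymm a b]; exact heab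
          rw [heaa, hebb, heab, heba]; ring
        have hdiff : (0:ℝ) ≤ (∑ j, e a j * y j) - (∑ j, e b j * y j) :=
          sub_nonneg.mpr hN
        have hQmono : ∑ i, ∑ j, e i j * y i * y j ≤ ∑ i, ∑ j, e i j * y' i * y' j := by
          have hexp := quad_expand e y u c
          have hid : ∑ i, ∑ j, e i j * y' i * y' j
              = ∑ i, ∑ j, e i j * (y i + c * u i) * (y j + c * u j) := rfl
          rw [hid, hexp, hBu y, hBy, hQu]
          nlinarith [mul_nonneg (hy b) hdiff]
        calc ∑ i, ∑ j, e i j * y i * y j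
            ≤ ∑ i, ∑ j, e i j * y' i * y' j := hQmono
          _ ≤ (1 - 1/(t:ℝ)) * (∑ i, y' i)^2 := ih y' hy'nn hcard'
          _ = (1 - 1/(t:ℝ)) * (∑ i, y i)^2 := by rw [hsum]
      rcases le_total (∑ j, (if Adj b0 j then (1:ℝ) else 0) * y j)
          (∑ j, (if Adj a0 j then (1:ℝ) else 0) * y j) with h | h
      · exact key a0 b0 ha0 hb0 hab0 hnadj0 h
      · exact key b0 a0 hb0 ha0 hab0.symm (fun hh => hnadj0 (hsym b0 a0 hh)) h

theorem neg_lambdaMin_le_of_Kr3_free (r n : ℕ) (hr : 1 ≤ r) (hn : 1 ≤ n)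
    (A : Matrix (Fin n) (Fin n) ℝ) (hA : IsSignedGraph A)
    (hfree : ∀ s : Finset (Fin n), ¬ IsKmMinus A (r + 3) s) :
    -(lambdaMin A) ≤ (n : ℝ) * (r + 1) / (r + 2) := by
  classical
  obtain ⟨hsymA, hdiag, hent⟩ := hA
  have hHerm : A.IsHermitian := by
    show Aᴴ = A
    ext i j
    simp [Matrix.conjTranspose_apply, hsymA.apply]
  have hne : (spectrum ℝ A).Nonempty :=
    ⟨hHerm.eigenvalues ⟨0, hn⟩, hHerm.eigenvalues_mem_spectrum_real ⟨0, hn⟩⟩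
  have hmem : lambdaMin A ∈ spectrum ℝ A := hne.csInf_mem (A.finite_spectrum)
  obtain ⟨v, hv0, hveq⟩ := exists_eigvec A hmem
  set μ := lambdaMin A with hμ
  set y : Fin n → ℝ := fun i => |v i| with hy
  set Adj : Fin n → Fin n → Prop := fun i j => A i j * v i * v j < 0 with hAdjdef
  have hsym : ∀ i j, Adj i j → Adj j i := by
    intro i j h
    show A j i * v j * v i < 0
    have heq : A j i * v j * v i = A i j * v i * v j := by rw [hsymA.apply i j]; ring
    rw [heq]; exact h
  have hirr : ∀ i, ¬ Adj i i := by
    intro i h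
    have : A i i * v i * v i < 0 := h
    rw [hdiag i] at this
    simp at this
  -- no clique of size r+3 in Adj
  have hfree' : ∀ s : Finset (Fin n), s.card = (r + 2) + 1 →
      ¬ (∀ i ∈ s, ∀ j ∈ s, i ≠ j → Adj i j) := by
    intro s hcard hclq
    have hclq' : ∀ i ∈ s, ∀ j ∈ s, i ≠ j → A i j * v i * v j < 0 := hclq
    apply hfree s
    refine ⟨by omega, ?_, ?_⟩
    · intro i hi j hj hij h0
      have := hclq' i hi j hj hij
      rw [h0] at this
      simp at this
    · -- build a negative triangle
      obtain ⟨a, ha⟩ := Finset.card_pos.mp (by omega : 0 < s.card)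
      obtain ⟨b, hb⟩ := Finset.card_pos.mp
        (show 0 < (s.erase a).card by rw [Finset.card_erase_of_mem ha]; omega)
      obtain ⟨c, hc⟩ := Finset.card_pos.mp
        (show 0 < ((s.erase a).erase b).card by
          rw [Finset.card_erase_of_mem hb, Finset.card_erase_of_mem ha]; omega)
      have hba : b ≠ a := (Finset.mem_erase.mp hb).1
      have hbs : b ∈ s := (Finset.mem_erase.mp hb).2
      have hcb : c ≠ b := (Finset.mem_erase.mp hc).1
      have hca : c ≠ a := (Finset.mem_erase.mp (Finset.mem_erase.mp hc).2).1
      have hcs : c ∈ s := (Finset.mem_erase.mp (Finset.mem_erase.mp hc).2).2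
      have h1 := hclq' a ha b hbs (Ne.symm hba)
      have h2 := hclq' b hbs c hcs (Ne.symm hcb)
      have h3 := hclq' c hcs a ha hca
      have hva : v a ≠ 0 := by intro h; rw [h] at h1; simp at h1
      have hvb : v b ≠ 0 := by intro h; rw [h] at h2; simp at h2
      have hvc : v c ≠ 0 := by intro h; rw [h] at h3; simp at h3
      have hA1 : A a b ≠ 0 := by intro h; rw [h] at h1; simp at h1
      have hA2 : A b c ≠ 0 := by intro h; rw [h] at h2; simp at h2
      have hA3 : A c a ≠ 0 := by intro h; rw [h] at h3; simp at h3
      have hneg : A a b * A b c * A c a < 0 := by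
        have hprod : (A a b * v a * v b) * ((A b c * v b * v c) * (A c a * v c * v a)) < 0 :=
          mul_neg_of_neg_of_pos h1 (mul_pos_of_neg_of_neg h2 h3)
        have heq : (A a b * v a * v b) * ((A b c * v b * v c) * (A c a * v c * v a))
            = (A a b * A b c * A c a) * (v a * v b * v c) ^ 2 := by ring
        rw [heq] at hprod
        have hP2 : 0 < (v a * v b * v c) ^ 2 :=
          pow_two_pos_of_ne_zero (mul_ne_zero (mul_ne_zero hva hvb) hvc)
        exact lt_of_not_ge fun hq => absurd hprod (not_lt.mpr (mul_nonneg hq hP2.le))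
      refine ⟨3, le_refl 3, fun i => if i = 0 then a else if i = 1 then b else c, ?_, ?_, ?_, ?_⟩
      · intro i hi j hj hij
        interval_cases i <;> interval_cases j <;> simp_all
      · intro i hi
        interval_cases i <;> simp_all
      · intro i hi
        interval_cases i <;> norm_num <;> assumption
      · rw [Finset.prod_range_succ, Finset.prod_range_succ, Finset.prod_range_succ,
          Finset.prod_range_zero]
        norm_num
        convert hneg using 2
  -- termwise bound
  have hle : ∑ i, ∑ j, (- A i j) * v i * v j
      ≤ ∑ i, ∑ j, (if Adj i j then (1:ℝ) else 0) * y i * y j := by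
    apply Finset.sum_le_sum; intro i _
    apply Finset.sum_le_sum; intro j _
    by_cases hadj : Adj i j
    · have h1 : A i j * v i * v j < 0 := hadj
      have h2 : |A i j| ≤ 1 := by rcases hent i j with h | h | h <;> simp [h]
      calc (- A i j) * v i * v j = |A i j * v i * v j| := by rw [abs_of_neg h1]; ring
        _ = |A i j| * (|v i| * |v j|) := by rw [abs_mul, abs_mul]; ring
        _ ≤ 1 * (|v i| * |v j|) :=
            mul_le_mul_of_nonneg_right h2 (mul_nonneg (abs_nonneg _) (abs_nonneg _))
        _ = (if Adj i j then (1:ℝ) else 0) * y i * y j := by rw [if_pos hadj]; ring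
    · have h1 : 0 ≤ A i j * v i * v j := not_lt.mp hadj
      have h2 : (- A i j) * v i * v j = -(A i j * v i * v j) := by ring
      rw [if_neg hadj, h2, zero_mul, zero_mul]
      linarith
  -- Rayleigh identity
  have hRay : ∑ i, ∑ j, A i j * v i * v j = μ * ∑ i, (v i) ^ 2 := by
    have step1 : ∑ i, ∑ j, A i j * v i * v j = ∑ i, v i * (A.mulVec v) i := by
      refine Finset.sum_congr rfl fun i _ => ?_
      rw [Matrix.mulVec, dotProduct, Finset.mul_sum]
      exact Finset.sum_congr rfl fun j _ => by ring
    rw [step1, hveq]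
    rw [Finset.mul_sum]
    exact Finset.sum_congr rfl fun i _ => by
      simp [Pi.smul_apply, smul_eq_mul]; ring
  have hneg_sum : ∑ i, ∑ j, (- A i j) * v i * v j = -(μ * ∑ i, (v i) ^ 2) := by
    rw [← hRay, ← Finset.sum_neg_distrib]
    refine Finset.sum_congr rfl fun i _ => ?_
    rw [← Finset.sum_neg_distrib]
    exact Finset.sum_congr rfl fun j _ => by ring
  -- Motzkin-Straus
  have hms := motzkin_straus Adj hsym hirr (r + 2) (by omega) hfree'
    (Finset.univ.filter (fun i => y i ≠ 0)).card y (fun i => abs_nonneg _) le_rfl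
  -- Cauchy-Schwarz
  have hCS : (∑ i, y i) ^ 2 ≤ (n : ℝ) * ∑ i, (y i) ^ 2 := by
    have := sq_sum_le_card_mul_sum_sq (s := (Finset.univ : Finset (Fin n))) (f := y)
    simpa [Finset.card_univ] using this
  have hysq : ∑ i, (y i) ^ 2 = ∑ i, (v i) ^ 2 :=
    Finset.sum_congr rfl fun i _ => by rw [hy]; exact sq_abs (v i)
  set W := ∑ i, (v i) ^ 2 with hW
  have hWpos : 0 < W := by
    obtain ⟨i, hi⟩ := Function.ne_iff.mp hv0
    have h1 : (v i) ^ 2 ≤ W := by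
      apply Finset.single_le_sum (fun j _ => sq_nonneg (v j)) (Finset.mem_univ i)
    have h2 : 0 < (v i) ^ 2 := pow_two_pos_of_ne_zero hi
    linarith
  have htc : ((r + 2 : ℕ) : ℝ) = (r : ℝ) + 2 := by push_cast; ring
  have hfrac : (0:ℝ) < (r : ℝ) + 2 := by positivity
  have hchain : -μ * W ≤ (1 - 1 / ((r : ℝ) + 2)) * ((n : ℝ) * W) := by
    have e1 : -μ * W = ∑ i, ∑ j, (- A i j) * v i * v j := by rw [hneg_sum]; ring
    have e2 : ∑ i, ∑ j, (if Adj i j then (1:ℝ) else 0) * y i * y j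
        ≤ (1 - 1 / ((r : ℝ) + 2)) * (∑ i, y i) ^ 2 := by
      rw [← htc]; exact hms
    have e3 : (1 - 1 / ((r : ℝ) + 2)) * (∑ i, y i) ^ 2
        ≤ (1 - 1 / ((r : ℝ) + 2)) * ((n : ℝ) * W) := by
      apply mul_le_mul_of_nonneg_left _ _
      · rw [← hysq]; exact hCS
      · have : 1 / ((r : ℝ) + 2) ≤ 1 := by
          rw [div_le_one hfrac]; linarith
        linarith
    linarith [hle, e1]
  have hfin : -μ ≤ (1 - 1 / ((r : ℝ) + 2)) * (n : ℝ) := by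
    have h2 : -μ * W ≤ ((1 - 1 / ((r : ℝ) + 2)) * (n : ℝ)) * W := by
      have : (1 - 1 / ((r : ℝ) + 2)) * ((n : ℝ) * W)
          = ((1 - 1 / ((r : ℝ) + 2)) * (n : ℝ)) * W := by ring
      linarith [hchain]
    exact le_of_mul_le_mul_right h2 hWpos
  have hfinal : (1 - 1 / ((r : ℝ) + 2)) * (n : ℝ) = (n : ℝ) * (r + 1) / (r + 2) := by
    field_simp
    ring
  rw [← hfinal]
  exact hfin
end

section
/- With the extremal setup below, for all sufficiently large n the eigenvector x has at most one zero coordinate. -/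
open Matrix

section Aux

/-- Rayleigh-type lower bound for the largest element of the real spectrum of a
real symmetric matrix. -/
lemma rayleigh_le_s7 {n : ℕ} {B : Matrix (Fin n) (Fin n) ℝ} (hB : B.IsHermitian)
    (y : Fin n → ℝ) (c : ℝ) (hy : 0 < y ⬝ᵥ y) (h : c * (y ⬝ᵥ y) ≤ y ⬝ᵥ (B *ᵥ y)) :
    c ≤ sSup (spectrum ℝ B) := by
  have hn : 0 < n := by
    rcases Nat.eq_zero_or_pos n with h0 | h0
    · subst h0; simp [dotProduct] at hy
    · exact h0
  haveI : Nonempty (Fin n) := ⟨⟨0, hn⟩⟩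
  set U : Matrix (Fin n) (Fin n) ℝ := (hB.eigenvectorUnitary : Matrix (Fin n) (Fin n) ℝ) with hU
  have hstar : star U = Uᵀ := by ext i j; simp [Matrix.conjTranspose_apply]
  have hUU : U * star U = 1 := (Matrix.mem_unitaryGroup_iff).mp hB.eigenvectorUnitary.2
  set z : Fin n → ℝ := Uᵀ *ᵥ y with hz
  set μ := Finset.univ.sup' Finset.univ_nonempty hB.eigenvalues with hμ
  obtain ⟨i₀, -, hi₀⟩ := Finset.exists_mem_eq_sup' (Finset.univ_nonempty) hB.eigenvalues
  have key : y ⬝ᵥ (B *ᵥ y) = ∑ i, hB.eigenvalues i * (z i * z i) := by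
    conv_lhs => rw [hB.spectral_theorem]
    rw [Unitary.conjStarAlgAut_apply, ← hU, ← Matrix.mulVec_mulVec, ← Matrix.mulVec_mulVec, Matrix.dotProduct_mulVec,
      ← Matrix.mulVec_transpose, hstar, ← hz]
    simp only [dotProduct, Matrix.mulVec_diagonal, Function.comp_apply,
      RCLike.ofReal_real_eq_id, id_eq]
    exact Finset.sum_congr rfl fun i _ => by ring
  have hzz : z ⬝ᵥ z = y ⬝ᵥ y := by
    conv_lhs => rw [hz, Matrix.dotProduct_mulVec, Matrix.vecMul_transpose,
      Matrix.mulVec_mulVec]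
    rw [← hstar, hUU, Matrix.one_mulVec]
  have hle : y ⬝ᵥ (B *ᵥ y) ≤ μ * (y ⬝ᵥ y) := by
    rw [key, ← hzz]
    have hterm : ∀ i ∈ Finset.univ, hB.eigenvalues i * (z i * z i) ≤ μ * (z i * z i) := by
      intro i _
      exact mul_le_mul_of_nonneg_right (Finset.le_sup' _ (Finset.mem_univ i)) (mul_self_nonneg _)
    calc ∑ i, hB.eigenvalues i * (z i * z i) ≤ ∑ i, μ * (z i * z i) :=
          Finset.sum_le_sum hterm
      _ = μ * (z ⬝ᵥ z) := by rw [dotProduct, Finset.mul_sum]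
  have hcμ : c ≤ μ := le_of_mul_le_mul_right (h.trans hle) hy
  refine hcμ.trans (le_csSup (Matrix.finite_spectrum B).bddAbove ?_)
  have h2 : μ = hB.eigenvalues i₀ := hi₀
  rw [h2]
  exact hB.eigenvalues_mem_spectrum_real i₀

lemma gamma_symm (s n : ℕ) : (GammaSN s n).IsSymm := by
  ext i j
  simp only [GammaSN, Matrix.transpose_apply, min_comm j.val i.val, eq_comm (a := j) (b := i),
    and_comm (a := j.val ≠ n - 1)]

lemma gamma_diag (s n : ℕ) (i : Fin n) : GammaSN s n i i = 0 := by simp [GammaSN]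

lemma gamma_vals (s n : ℕ) (i j : Fin n) :
    GammaSN s n i j = -1 ∨ GammaSN s n i j = 0 ∨ GammaSN s n i j = 1 := by
  unfold GammaSN; split_ifs <;> simp

lemma gamma_comp (s n : ℕ) (i j : Fin n) (hij : i ≠ j) (hi : i.val ≠ n - 1)
    (hj : j.val ≠ n - 1) : GammaSN s n i j = 1 := by
  unfold GammaSN
  rw [if_neg hij, if_pos ⟨hi, hj⟩]

lemma gamma_last_zero (s n : ℕ) (hn : 2 ≤ n) :
    GammaSN s n ⟨n - 1, by omega⟩ ⟨0, by omega⟩ = -1 := by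
  unfold GammaSN
  rw [if_neg (by simp [Fin.ext_iff]; omega), if_neg (by simp), if_pos (by simp)]

lemma gamma_last_ge (n : ℕ) (i : Fin n) (hi : 2 ≤ i.val) (hi2 : i.val ≠ n - 1) :
    GammaSN 1 n i ⟨n - 1, by omega⟩ = 0 := by
  unfold GammaSN
  rw [if_neg (by simp [Fin.ext_iff]; try omega), if_neg (by simp [Fin.ext_iff]; try omega),
    if_neg (by simp [Fin.ext_iff]; try omega), if_neg (by simp [Fin.ext_iff]; try omega)]

lemma gamma_one_last (n : ℕ) (hn : 3 ≤ n) :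
    GammaSN 1 n ⟨1, by omega⟩ ⟨n - 1, by omega⟩ = 1 := by
  unfold GammaSN
  rw [if_neg (by simp [Fin.ext_iff]; try omega), if_neg (by simp [Fin.ext_iff]; try omega),
    if_neg (by simp [Fin.ext_iff]; try omega), if_pos (by simp [Fin.ext_iff]; try omega)]

lemma gamma_zero_one (n : ℕ) (hn : 3 ≤ n) :
    GammaSN 1 n ⟨0, by omega⟩ ⟨1, by omega⟩ = 1 :=
  gamma_comp 1 n _ _ (by simp [Fin.ext_iff]) (by simp; omega) (by simp; omega)

lemma gamma_unbal (n : ℕ) (hn : 8 ≤ n) : HasNegCycleOn (GammaSN 1 n) Set.univ := by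
  refine ⟨3, le_refl 3, fun i => if i % 3 = 0 then ⟨n - 1, by omega⟩ else
    if i % 3 = 1 then ⟨0, by omega⟩ else ⟨1, by omega⟩, ?_, fun i _ => Set.mem_univ _, ?_, ?_⟩
  · intro i hi j hj hij
    interval_cases i <;> interval_cases j <;> simp_all [Fin.ext_iff] <;> omega
  · intro i hi
    interval_cases i <;> norm_num
    · rw [gamma_last_zero 1 n (by omega)]; norm_num
    · rw [gamma_zero_one n (by omega)]; norm_num
    · rw [gamma_one_last n (by omega)]; norm_num
  · rw [Finset.prod_range_succ, Finset.prod_range_succ, Finset.prod_range_one]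
    norm_num
    rw [gamma_last_zero 1 n (by omega), gamma_zero_one n (by omega),
      gamma_one_last n (by omega)]
    norm_num

lemma gamma_no_k4 (n : ℕ) (hn : 8 ≤ n) : {s : Finset (Fin n) | IsK4Minus (GammaSN 1 n) s} = ∅ := by
  ext s
  simp only [Set.mem_setOf_eq, Set.mem_empty_iff_false, iff_false]
  rintro ⟨hcard, hadj, m, hm, c, hinj, hmem, hnz, hprod⟩
  set L : Fin n := ⟨n - 1, by omega⟩ with hL
  by_cases hLs : L ∈ s
  · have hsub : s.erase L ⊆ {⟨0, by omega⟩, ⟨1, by omega⟩} := by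
      intro i hi
      have hiL : i ≠ L := Finset.ne_of_mem_erase hi
      have his : i ∈ s := Finset.mem_of_mem_erase hi
      have hval : i.val ≤ 1 := by
        by_contra hv
        push_neg at hv
        have hne : i.val ≠ n - 1 := fun h => hiL (Fin.ext (by simp [hL, h]))
        have := hadj i his L hLs hiL
        rw [gamma_last_ge n i hv hne] at this
        exact this rfl
      simp only [Finset.mem_insert, Finset.mem_singleton, Fin.ext_iff]
      omega
    have h3 : (s.erase L).card = 3 := by rw [Finset.card_erase_of_mem hLs, hcard]
    have hcc := Finset.card_le_card hsub
    rw [h3] at hcc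
    have : ({⟨0, by omega⟩, ⟨1, by omega⟩} : Finset (Fin n)).card ≤ 2 :=
      Finset.card_insert_le _ _ |>.trans (by simp)
    omega
  · have hone : ∀ i ∈ Finset.range m,
        GammaSN 1 n (c i) (c ((i + 1) % m)) = 1 := by
      intro i hi
      rw [Finset.mem_range] at hi
      have h1 : c i ∈ s := by exact_mod_cast hmem i hi
      have h2 : c ((i + 1) % m) ∈ s := by
        exact_mod_cast hmem _ (Nat.mod_lt _ (by omega))
      have hne : c i ≠ c ((i + 1) % m) := by
        intro h
        exact hnz i hi (h ▸ gamma_diag 1 n (c i))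
      refine gamma_comp 1 n _ _ hne ?_ ?_
      · intro h; exact hLs (by rwa [show L = c i from (Fin.ext (by simp [hL, h])).symm])
      · intro h; exact hLs (by rwa [show L = c ((i+1)%m) from (Fin.ext (by simp [hL, h])).symm])
    rw [Finset.prod_congr rfl hone, Finset.prod_const_one] at hprod
    norm_num at hprod

noncomputable def yvec (n : ℕ) : Fin n → ℝ := fun i => if i.val = n - 1 then 0 else 1

lemma yvec_dot (n : ℕ) (hn : 8 ≤ n) : yvec n ⬝ᵥ yvec n = (n : ℝ) - 1 := by
  have hterm : ∀ i ∈ Finset.univ, yvec n i * yvec n i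
      = 1 - (if i = (⟨n - 1, by omega⟩ : Fin n) then (1:ℝ) else 0) := by
    intro i _
    simp only [yvec, Fin.ext_iff]
    split_ifs <;> simp_all
  rw [dotProduct, Finset.sum_congr rfl hterm, Finset.sum_sub_distrib,
    Finset.sum_const, Finset.sum_ite_eq' Finset.univ _ (fun _ => (1:ℝ))]
  simp

lemma yvec_quad (n : ℕ) (hn : 8 ≤ n) :
    yvec n ⬝ᵥ (GammaSN 1 n *ᵥ yvec n) = ((n : ℝ) - 2) * ((n : ℝ) - 1) := by
  set L : Fin n := ⟨n - 1, by omega⟩ with hL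
  have inner : ∀ i : Fin n, i ≠ L → (GammaSN 1 n *ᵥ yvec n) i = (n : ℝ) - 2 := by
    intro i hi
    have hiv : i.val ≠ n - 1 := by
      intro h; exact hi (Fin.ext (by simp [hL, h]))
    have hterm : ∀ j ∈ Finset.univ, GammaSN 1 n i j * yvec n j
        = 1 - (if j = L then (1:ℝ) else 0) - (if j = i then (1:ℝ) else 0) := by
      intro j _
      by_cases hjL : j = L
      · subst hjL
        simp only [yvec, hL, if_pos rfl, if_neg (fun h : L = i => hi h.symm)]
        simp [yvec]
        exact fun h => hi (h.symm.trans hL.symm)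
      · have hjv : j.val ≠ n - 1 := by
          intro h; exact hjL (Fin.ext (by simp [hL, h]))
        by_cases hji : j = i
        · subst hji
          simp [gamma_diag, hi]
        · rw [gamma_comp 1 n i j (Ne.symm hji) hiv hjv]
          simp only [yvec, if_neg hjv, if_neg hjL, if_neg hji]
          norm_num
    rw [Matrix.mulVec, dotProduct, Finset.sum_congr rfl hterm]
    rw [Finset.sum_sub_distrib, Finset.sum_sub_distrib, Finset.sum_const,
      Finset.sum_ite_eq' Finset.univ _ (fun _ => (1:ℝ)),
      Finset.sum_ite_eq' Finset.univ _ (fun _ => (1:ℝ))]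
    simp
    ring
  have hterm : ∀ i ∈ Finset.univ, yvec n i * (GammaSN 1 n *ᵥ yvec n) i
      = ((n:ℝ) - 2) * (1 - (if i = L then (1:ℝ) else 0)) := by
    intro i _
    by_cases hiL : i = L
    · subst hiL; simp [yvec, hL]
    · rw [inner i hiL]
      have hy1 : yvec n i = 1 := by
        simp only [yvec, if_neg (fun h : i.val = n-1 => hiL (Fin.ext (by simp [hL, h])))]
      rw [hy1, if_neg hiL]
      ring
  rw [dotProduct, Finset.sum_congr rfl hterm, ← Finset.mul_sum,
    Finset.sum_sub_distrib, Finset.sum_const,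
    Finset.sum_ite_eq' Finset.univ _ (fun _ => (1:ℝ))]
  simp

end Aux

theorem extremal_eigenvector_at_most_one_zero (t r : ℕ) (ht : 2 ≤ t)
    (hr : (r : ℝ) = (1 + Real.sqrt (8 * (t : ℝ) - 7)) / 2) :
    ∃ N : ℕ, ∀ n : ℕ, N + 4 ≤ n → t ≤ (n - 2).choose 2 →
      ∀ (A : Matrix (Fin n) (Fin n) ℝ) (x : Fin n → ℝ),
        IsSignedGraph A → IsUnbalanced A → TK4Free t A →
        (∀ B : Matrix (Fin n) (Fin n) ℝ,
          IsSignedGraph B → IsUnbalanced B → TK4Free t B → lambdaMax B ≤ lambdaMax A) →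
        (∀ i, 0 ≤ x i) → (∑ i, x i ^ 2) = 1 → A.mulVec x = lambdaMax A • x →
        {i : Fin n | x i = 0}.ncard ≤ 1 := by
  refine ⟨4, ?_⟩
  intro n hn8 hchoose A x hsg hunb htfree hmax hxnn hxnorm heig
  have hn : 8 ≤ n := by omega
  set B := GammaSN 1 n with hBdef
  have hBsg : IsSignedGraph B := ⟨gamma_symm 1 n, gamma_diag 1 n, gamma_vals 1 n⟩
  have hBunb : IsUnbalanced B := gamma_unbal n hn
  have hBfree : TK4Free t B := by
    unfold TK4Free
    rw [hBdef, gamma_no_k4 n hn]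
    simpa using (by omega : 0 < t)
  have hBherm : B.IsHermitian := by
    rw [Matrix.IsHermitian]
    ext i j
    rw [Matrix.conjTranspose_apply, star_trivial, hBdef, (gamma_symm 1 n).apply]
  have hcast : (8:ℝ) ≤ (n:ℝ) := by exact_mod_cast hn
  have hlow : ((n:ℝ) - 2) ≤ lambdaMax B := by
    apply rayleigh_le_s7 hBherm (yvec n)
    · rw [yvec_dot n hn]; linarith
    · rw [yvec_dot n hn, yvec_quad n hn]
  have hlam : ((n:ℝ) - 2) ≤ lambdaMax A := hlow.trans (hmax B hBsg hBunb hBfree)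
  by_contra hcontra
  push_neg at hcontra
  obtain ⟨u, v, hu, hv, huv⟩ := (Set.one_lt_ncard_iff (Set.toFinite _)).mp hcontra
  simp only [Set.mem_setOf_eq] at hu hv
  obtain ⟨i₀, -, hi₀⟩ := Finset.exists_max_image Finset.univ x ⟨⟨0, by omega⟩, Finset.mem_univ _⟩
  have hpos : 0 < x i₀ := by
    by_contra hp
    push_neg at hp
    have hall : ∀ j, x j = 0 := fun j =>
      le_antisymm ((hi₀ j (Finset.mem_univ _)).trans hp) (hxnn j)
    simp [hall] at hxnorm
  have hiu : i₀ ≠ u := fun h => by rw [h, hu] at hpos; exact lt_irrefl _ hpos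
  have hiv : i₀ ≠ v := fun h => by rw [h, hv] at hpos; exact lt_irrefl _ hpos
  set S : Finset (Fin n) := {i₀, u, v} with hS
  have hScard : S.card = 3 := by
    rw [hS, Finset.card_insert_of_notMem (by simp [hiu, hiv]),
      Finset.card_insert_of_notMem (by simp [huv]), Finset.card_singleton]
  have hsum0 : ∑ j ∈ S, A i₀ j * x j = 0 := by
    refine Finset.sum_eq_zero ?_
    intro j hj
    rw [hS] at hj
    simp only [Finset.mem_insert, Finset.mem_singleton] at hj
    rcases hj with rfl | rfl | rfl
    · rw [hsg.2.1 j]; ring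
    · rw [hu]; ring
    · rw [hv]; ring
  have heq : lambdaMax A * x i₀ = ∑ j, A i₀ j * x j := by
    have := congrFun heig i₀
    simp only [Pi.smul_apply, smul_eq_mul] at this
    rw [← this]
    simp [Matrix.mulVec, dotProduct]
  have hsplit : ∑ j, A i₀ j * x j
      = ∑ j ∈ Finset.univ \ S, A i₀ j * x j + ∑ j ∈ S, A i₀ j * x j :=
    (Finset.sum_sdiff (Finset.subset_univ S)).symm
  have hcard2 : (Finset.univ \ S).card = n - 3 := by
    rw [Finset.card_sdiff_of_subset (Finset.subset_univ S), hScard, Finset.card_univ, Fintype.card_fin]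
  have hbound : ∑ j ∈ Finset.univ \ S, A i₀ j * x j ≤ ((n:ℝ) - 3) * x i₀ := by
    have step1 : ∑ j ∈ Finset.univ \ S, A i₀ j * x j ≤ ∑ j ∈ Finset.univ \ S, x j := by
      refine Finset.sum_le_sum ?_
      intro j _
      have hA1 : A i₀ j ≤ 1 := by
        rcases hsg.2.2 i₀ j with h | h | h <;> rw [h] <;> norm_num
      calc A i₀ j * x j ≤ 1 * x j := mul_le_mul_of_nonneg_right hA1 (hxnn j)
        _ = x j := one_mul _
    have step2 : ∑ j ∈ Finset.univ \ S, x j ≤ (Finset.univ \ S).card • x i₀ :=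
      Finset.sum_le_card_nsmul _ _ _ (fun j _ => hi₀ j (Finset.mem_univ _))
    have hc3 : ((n - 3 : ℕ) : ℝ) = (n:ℝ) - 3 := by
      have h3 : 3 ≤ n := by omega
      push_cast [Nat.cast_sub h3]
      ring
    calc ∑ j ∈ Finset.univ \ S, A i₀ j * x j ≤ ∑ j ∈ Finset.univ \ S, x j := step1
      _ ≤ (Finset.univ \ S).card • x i₀ := step2
      _ = ((n:ℝ) - 3) * x i₀ := by rw [nsmul_eq_mul, hcard2, hc3]
  have hfinal : lambdaMax A * x i₀ ≤ ((n:ℝ) - 3) * x i₀ := by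
    rw [heq, hsplit, hsum0, add_zero]
    exact hbound
  have hlam3 : lambdaMax A ≤ (n:ℝ) - 3 := le_of_mul_le_mul_right hfinal hpos
  linarith
end

section
/- With the extremal setup below, for all sufficiently large n the underlying graph of Γ′ is connected. -/
open Matrix

lemma rayleigh_aux {n : ℕ} (B : Matrix (Fin n) (Fin n) ℝ) (hB : B.IsHermitian)
    (x : Fin n → ℝ) (hx : ∑ i, x i ^ 2 = 1) :
    x ⬝ᵥ B *ᵥ x ≤ lambdaMax B ∧
      (lambdaMax B ≤ x ⬝ᵥ B *ᵥ x → B *ᵥ x = lambdaMax B • x) := by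
  classical
  set b := hB.eigenvectorBasis with hb
  set lam := hB.eigenvalues with hlam
  set w : Fin n → Fin n → ℝ := fun k => ⇑(b k) with hw
  set c : Fin n → ℝ := fun k => w k ⬝ᵥ x with hc
  -- representation of x in eigenbasis
  have hinner : ∀ (u : EuclideanSpace ℝ (Fin n)) (v : EuclideanSpace ℝ (Fin n)),
      (inner ℝ u v : ℝ) = ∑ a, u a * v a := by
    intro u v
    simp [PiLp.inner_apply, mul_comm]
  have hinnerc : ∀ k, (inner ℝ (b k) (WithLp.toLp 2 x : EuclideanSpace ℝ (Fin n)) : ℝ) = c k := by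
    intro k
    rw [hinner]
    rfl
  have hrepr : ∀ a, x a = ∑ k, c k * w k a := by
    intro a
    have h : (∑ k, (inner ℝ (b k) (WithLp.toLp 2 x : EuclideanSpace ℝ (Fin n)) : ℝ) • (w k)) = x :=
      by
        have := congrArg WithLp.ofLp (b.sum_repr' (WithLp.toLp 2 x : EuclideanSpace ℝ (Fin n)))
        simpa [w, WithLp.ofLp_sum] using this
    calc x a = (∑ k, (inner ℝ (b k) (WithLp.toLp 2 x : EuclideanSpace ℝ (Fin n)) : ℝ) • (w k)) a := by rw [h]
      _ = ∑ k, (inner ℝ (b k) (WithLp.toLp 2 x : EuclideanSpace ℝ (Fin n)) : ℝ) * w k a := by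
          simp [Finset.sum_apply]
      _ = ∑ k, c k * w k a := by simp [hinnerc]
  have hx1 : x ⬝ᵥ x = 1 := by
    rw [← hx]; simp [dotProduct, sq]
  have hc2 : ∑ k, c k ^ 2 = 1 := by
    have : x ⬝ᵥ x = ∑ k, c k ^ 2 := by
      calc x ⬝ᵥ x = ∑ a, (∑ k, c k * w k a) * x a := by
            simp only [dotProduct]
            exact Finset.sum_congr rfl fun a _ => by rw [← hrepr a]
        _ = ∑ k, c k * (w k ⬝ᵥ x) := by
            simp_rw [Finset.sum_mul]
            rw [Finset.sum_comm]
            refine Finset.sum_congr rfl fun k _ => ?_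
            rw [dotProduct, Finset.mul_sum]
            exact Finset.sum_congr rfl fun a _ => by ring
        _ = ∑ k, c k ^ 2 := by simp [hc, sq]
    rw [← this, hx1]
  have hBw : ∀ k, B *ᵥ w k = fun a => lam k * w k a := by
    intro k
    have := hB.mulVec_eigenvectorBasis k
    funext a
    have := congrFun this a
    simpa using this
  have hBx : B *ᵥ x = fun a => ∑ k, lam k * c k * w k a := by
    funext a
    calc (B *ᵥ x) a = ∑ i, B a i * x i := rfl
      _ = ∑ i, B a i * ∑ k, c k * w k i := by
          exact Finset.sum_congr rfl fun i _ => by rw [← hrepr i]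
      _ = ∑ k, c k * ∑ i, B a i * w k i := by
          simp_rw [Finset.mul_sum]
          rw [Finset.sum_comm]
          refine Finset.sum_congr rfl fun k _ => ?_
          exact Finset.sum_congr rfl fun i _ => by ring
      _ = ∑ k, lam k * c k * w k a := by
          refine Finset.sum_congr rfl fun k _ => ?_
          have : (∑ i, B a i * w k i) = (B *ᵥ w k) a := rfl
          rw [this, hBw k]; ring
  have hQ : x ⬝ᵥ B *ᵥ x = ∑ k, lam k * c k ^ 2 := by
    rw [hBx]
    calc ∑ a, x a * ∑ k, lam k * c k * w k a
        = ∑ k, lam k * c k * ∑ a, w k a * x a := by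
          simp_rw [Finset.mul_sum]
          rw [Finset.sum_comm]
          refine Finset.sum_congr rfl fun k _ => ?_
          exact Finset.sum_congr rfl fun a _ => by ring
      _ = ∑ k, lam k * c k ^ 2 := by
          refine Finset.sum_congr rfl fun k _ => ?_
          have : (∑ a, w k a * x a) = c k := rfl
          rw [this]; ring
  have hbdd : BddAbove (spectrum ℝ B) := (Matrix.finite_spectrum B).bddAbove
  have hle : ∀ k, lam k ≤ lambdaMax B := fun k =>
    le_csSup hbdd (hB.eigenvalues_mem_spectrum_real k)
  have hQle : x ⬝ᵥ B *ᵥ x ≤ lambdaMax B := by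
    rw [hQ]
    calc ∑ k, lam k * c k ^ 2 ≤ ∑ k, lambdaMax B * c k ^ 2 :=
          Finset.sum_le_sum fun k _ => mul_le_mul_of_nonneg_right (hle k) (sq_nonneg _)
      _ = lambdaMax B := by rw [← Finset.mul_sum, hc2, mul_one]
  refine ⟨hQle, fun heq => ?_⟩
  have heq' : x ⬝ᵥ B *ᵥ x = lambdaMax B := le_antisymm hQle heq
  have hzero : ∀ k ∈ Finset.univ, (lambdaMax B - lam k) * c k ^ 2 = 0 := by
    have hsum0 : ∑ k, (lambdaMax B - lam k) * c k ^ 2 = 0 := by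
      have : ∑ k, (lambdaMax B - lam k) * c k ^ 2
          = lambdaMax B * ∑ k, c k ^ 2 - ∑ k, lam k * c k ^ 2 := by
        rw [Finset.mul_sum, ← Finset.sum_sub_distrib]
        exact Finset.sum_congr rfl fun k _ => by ring
      rw [this, hc2, mul_one, ← hQ, heq', sub_self]
    exact (Finset.sum_eq_zero_iff_of_nonneg fun k _ =>
      mul_nonneg (sub_nonneg.mpr (hle k)) (sq_nonneg _)).mp hsum0
  have hmode : ∀ k, lam k * c k = lambdaMax B * c k := by
    intro k
    rcases mul_eq_zero.mp (hzero k (Finset.mem_univ k)) with h | h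
    · have : lam k = lambdaMax B := by linarith [sub_eq_zero.mp h]
      rw [this]
    · have : c k = 0 := by
        have := sq_eq_zero_iff.mp h
        exact this
      rw [this, mul_zero, mul_zero]
  rw [hBx]
  funext a
  simp only [Pi.smul_apply, smul_eq_mul]
  calc ∑ k, lam k * c k * w k a = ∑ k, lambdaMax B * (c k * w k a) := by
        refine Finset.sum_congr rfl fun k _ => ?_
        rw [show lam k * c k * w k a = (lam k * c k) * w k a from rfl, hmode k]; ring
    _ = lambdaMax B * x a := by rw [← Finset.mul_sum, ← hrepr a]

theorem extremal_underlying_connected (t r : ℕ) (ht : 2 ≤ t)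
    (hr : (r : ℝ) = (1 + Real.sqrt (8 * (t : ℝ) - 7)) / 2) :
    ∃ N : ℕ, ∀ n : ℕ, N + 4 ≤ n → t ≤ (n - 2).choose 2 →
      ∀ (A : Matrix (Fin n) (Fin n) ℝ) (x : Fin n → ℝ),
        IsSignedGraph A → IsUnbalanced A → TK4Free t A →
        (∀ B : Matrix (Fin n) (Fin n) ℝ,
          IsSignedGraph B → IsUnbalanced B → TK4Free t B → lambdaMax B ≤ lambdaMax A) →
        (∀ i, 0 ≤ x i) → (∑ i, x i ^ 2) = 1 → A.mulVec x = lambdaMax A • x →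
        (SimpleGraph.fromRel (fun i j => A i j ≠ 0)).Connected := by
  classical
  refine ⟨0, fun n hn _ A x hA hUnb hFree hExt hxnn hxnorm hEig => ?_⟩
  have hn4 : 4 ≤ n := by omega
  have hne : Nonempty (Fin n) := ⟨⟨0, by omega⟩⟩
  set G := SimpleGraph.fromRel (fun i j : Fin n => A i j ≠ 0) with hG
  -- a vertex with positive weight
  have hxi : ∃ i, 0 < x i := by
    by_contra h
    push_neg at h
    have hz : ∀ i, x i = 0 := fun i => le_antisymm (h i) (hxnn i)
    simp [hz] at hxnorm
  obtain ⟨i, hxipos⟩ := hxi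
  -- main claim: everything is reachable from i
  have hreach : ∀ j, G.Reachable i j := by
    intro j
    by_contra hj
    have hij : i ≠ j := by rintro rfl; exact hj (SimpleGraph.Reachable.refl _)
    have hAij : A i j = 0 := by
      by_contra h
      exact hj ((SimpleGraph.fromRel_adj _ i j).mpr ⟨hij, Or.inl h⟩).reachable
    have hAji : A j i = 0 := by rw [hA.1.apply]; exact hAij
    -- the modified matrix B
    set B : Matrix (Fin n) (Fin n) ℝ :=
      fun a b => if (a = i ∧ b = j) ∨ (a = j ∧ b = i) then 1 else A a b with hB
    have hBagree : ∀ a b, ¬((a = i ∧ b = j) ∨ (a = j ∧ b = i)) → B a b = A a b := by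
      intro a b h; simp [hB, h]
    have hBij : B i j = 1 := by simp [hB]
    have hBji : B j i = 1 := by simp [hB, hij]
    -- B is a signed graph
    have hBsigned : IsSignedGraph B := by
      refine ⟨?_, ?_, ?_⟩
      · ext a b
        rw [transpose_apply]; simp only [hB]
        by_cases h : (b = i ∧ a = j) ∨ (b = j ∧ a = i)
        · rw [if_pos h, if_pos (by tauto)]
        · rw [if_neg h, if_neg (by tauto)]
          exact hA.1.apply a b ▸ rfl
      · intro a
        have : ¬((a = i ∧ a = j) ∨ (a = j ∧ a = i)) := by
          rintro (⟨rfl, rfl⟩ | ⟨rfl, rfl⟩) <;> exact hij rfl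
        rw [hBagree a a this]; exact hA.2.1 a
      · intro a b
        by_cases h : (a = i ∧ b = j) ∨ (a = j ∧ b = i)
        · right; right; simp [hB, h]
        · rw [hBagree a b h]; exact hA.2.2 a b
    -- B is unbalanced
    have hcycagree : ∀ (c : ℕ → Fin n) (m : ℕ),
        (∀ a < m, A (c a) (c ((a + 1) % m)) ≠ 0) →
        ∀ a < m, B (c a) (c ((a + 1) % m)) = A (c a) (c ((a + 1) % m)) := by
      intro c m hne' a ha
      refine hBagree _ _ ?_
      rintro (⟨h1, h2⟩ | ⟨h1, h2⟩)
      · exact hne' a ha (by rw [h1, h2]; exact hAij)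
      · exact hne' a ha (by rw [h1, h2]; exact hAji)
    have hBunb : IsUnbalanced B := by
      obtain ⟨m, hm, c, hinj, hmem, hne', hprod⟩ := hUnb
      refine ⟨m, hm, c, hinj, hmem, ?_, ?_⟩
      · intro a ha; rw [hcycagree c m hne' a ha]; exact hne' a ha
      · rw [Finset.prod_congr rfl fun a ha =>
          hcycagree c m hne' a (Finset.mem_range.mp ha)]
        exact hprod
    -- B is t-K4⁻-free
    have hBfree : TK4Free t B := by
      have hsub : {s : Finset (Fin n) | IsK4Minus B s} ⊆ {s | IsK4Minus A s} := by
        rintro s ⟨hcard, hadj, hcyc⟩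
        have hnotboth : ¬(i ∈ s ∧ j ∈ s) := by
          rintro ⟨his, hjs⟩
          have hsub2 : ¬ s ⊆ ({i, j} : Finset (Fin n)) := by
            intro hss
            have := Finset.card_le_card hss
            have : ({i, j} : Finset (Fin n)).card ≤ 2 := Finset.card_insert_le _ _ |>.trans (by simp)
            omega
          obtain ⟨k, hks, hknotij⟩ := Finset.not_subset.mp hsub2
          simp only [Finset.mem_insert, Finset.mem_singleton, not_or] at hknotij
          obtain ⟨hki, hkj⟩ := hknotij
          have hAki : A k i ≠ 0 := by
            rw [← hBagree k i (by rintro (⟨h1, _⟩ | ⟨h1, _⟩) <;> [exact hki h1; exact hkj h1])]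
            exact hadj k hks i his hki
          have hAkj : A k j ≠ 0 := by
            rw [← hBagree k j (by rintro (⟨h1, _⟩ | ⟨h1, _⟩) <;> [exact hki h1; exact hkj h1])]
            exact hadj k hks j hjs hkj
          have h1 : G.Adj i k := (SimpleGraph.fromRel_adj _ i k).mpr ⟨Ne.symm hki, Or.inr hAki⟩
          have h2 : G.Adj k j := (SimpleGraph.fromRel_adj _ k j).mpr ⟨hkj, Or.inl hAkj⟩
          exact hj (h1.reachable.trans h2.reachable)
        have hag : ∀ a ∈ s, ∀ b ∈ s, B a b = A a b := by
          intro a ha b hb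
          refine hBagree a b ?_
          rintro (⟨rfl, rfl⟩ | ⟨rfl, rfl⟩)
          · exact hnotboth ⟨ha, hb⟩
          · exact hnotboth ⟨hb, ha⟩
        refine ⟨hcard, fun a ha b hb hab => by rw [← hag a ha b hb]; exact hadj a ha b hb hab, ?_⟩
        obtain ⟨m, hm, c, hinj, hmem, hne', hprod⟩ := hcyc
        refine ⟨m, hm, c, hinj, hmem, ?_, ?_⟩
        · intro a ha
          rw [← hag _ (hmem a ha) _ (hmem _ (Nat.mod_lt _ (by omega)))]
          exact hne' a ha
        · rw [← Finset.prod_congr rfl fun a ha =>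
            hag _ (hmem a (Finset.mem_range.mp ha)) _ (hmem _ (Nat.mod_lt _ (by omega)))]
          exact hprod
      exact lt_of_le_of_lt (Set.ncard_le_ncard hsub (Set.toFinite _)) hFree
    have hBle : lambdaMax B ≤ lambdaMax A := hExt B hBsigned hBunb hBfree
    -- Hermitian
    have hBherm : B.IsHermitian := by
      rw [Matrix.IsHermitian]
      ext a b
      rw [Matrix.conjTranspose_apply, star_trivial]
      exact congrFun (congrFun hBsigned.1 b) a ▸ (hBsigned.1.apply b a)
    -- quadratic forms
    have hxx : x ⬝ᵥ x = 1 := by rw [← hxnorm]; simp [dotProduct, sq]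
    have hQA : x ⬝ᵥ A *ᵥ x = lambdaMax A := by
      rw [hEig, dotProduct_smul, smul_eq_mul, hxx, mul_one]
    have hmulB : ∀ a, (B *ᵥ x) a = (A *ᵥ x) a
        + (if a = i then x j else 0) + (if a = j then x i else 0) := by
      intro a
      simp only [mulVec, dotProduct]
      have : ∀ b, B a b * x b = A a b * x b
          + (if a = i ∧ b = j then x b else 0) + (if a = j ∧ b = i then x b else 0) := by
        intro b
        by_cases h1 : a = i ∧ b = j
        · have hne2 : ¬(a = j ∧ b = i) := by rintro ⟨rfl, rfl⟩; exact hij (h1.1 ▸ rfl)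
          rw [if_pos h1, if_neg hne2, h1.1, h1.2, hBij, hAij]; ring
        · by_cases h2 : a = j ∧ b = i
          · rw [if_neg h1, if_pos h2, h2.1, h2.2, hBji, hAji]; ring
          · rw [hBagree a b (by tauto), if_neg h1, if_neg h2]; ring
      rw [Finset.sum_congr rfl fun b _ => this b]
      rw [Finset.sum_add_distrib, Finset.sum_add_distrib]
      congr 1
      · congr 1
        by_cases ha : a = i
        · simp [ha]
        · simp [ha]
      · by_cases ha : a = j
        · simp [ha]
        · simp [ha]
    have hQB : x ⬝ᵥ B *ᵥ x = lambdaMax A + (x i * x j + x j * x i) := by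
      have e1 : x ⬝ᵥ B *ᵥ x = (∑ a, x a * (A *ᵥ x) a)
          + ((∑ a, x a * (if a = i then x j else 0))
            + (∑ a, x a * (if a = j then x i else 0))) := by
        simp only [dotProduct]
        rw [Finset.sum_congr rfl fun a (_ : a ∈ Finset.univ) => by rw [hmulB a]]
        simp only [mul_add]
        rw [Finset.sum_add_distrib, Finset.sum_add_distrib]
        ring
      have hs1 : (∑ a, x a * (if a = i then x j else 0)) = x i * x j := by simp
      have hs2 : (∑ a, x a * (if a = j then x i else 0)) = x j * x i := by simp
      rw [e1, hs1, hs2, show (∑ a, x a * (A *ᵥ x) a) = x ⬝ᵥ A *ᵥ x from rfl, hQA]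
    obtain ⟨hray1, hray2⟩ := rayleigh_aux B hBherm x hxnorm
    have hprod0 : x i * x j ≤ 0 := by
      have := hray1
      rw [hQB] at this
      nlinarith [hxnn i, hxnn j]
    have hxj : x j = 0 := by
      have h1 : 0 ≤ x i * x j := mul_nonneg (le_of_lt hxipos) (hxnn j)
      have h2 : x i * x j = 0 := le_antisymm hprod0 h1
      rcases mul_eq_zero.mp h2 with h | h
      · exact absurd h (ne_of_gt hxipos)
      · exact h
    have hQBA : x ⬝ᵥ B *ᵥ x = lambdaMax A := by
      rw [hQB, hxj]; ring
    have hEigB : B *ᵥ x = lambdaMax B • x := hray2 (by rw [hQBA]; exact hBle)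
    have hcontr : (B *ᵥ x) j = x i := by
      rw [hmulB j, if_neg (Ne.symm hij), if_pos rfl]
      have : (A *ᵥ x) j = lambdaMax A * x j := by rw [hEig]; rfl
      rw [this, hxj]; ring
    rw [hEigB] at hcontr
    simp only [Pi.smul_apply, smul_eq_mul, hxj, mul_zero] at hcontr
    exact absurd hcontr.symm (ne_of_gt hxipos)
  rw [SimpleGraph.connected_iff]
  exact ⟨fun u v => (hreach u).symm.trans (hreach v), hne⟩
end
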